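/- arXiv:1106.0519 — 9 statements merged into one kernel-verified Lean document; each statement's English description precedes it below -/
import Mathlib

section
/- Let X be a nonnegative random variable whose distribution F is MHR. For p ∈ [1,∞), define α_p = inf{x : F(x) ≥ 1 - 1/p} (with α_1 = u_min). Then for all m ≥ 1 and d ≥ 1, it holds that d·α_m ≥ α_{m^d}. -/
/-- `alphaQ F p = inf {x | F x ≥ 1 - 1/p}`, the `(1 - 1/p)`-quantile of the cdf `F`. -/
noncomputable def alphaQ (F : ℝ → ℝ) (p : ℝ) : ℝ :=
  sInf {x : ℝ | 1 - 1 / p ≤ F x}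

/-- The derivative of a monotone function is nonnegative. -/
lemma monotone_hasDerivAt_nonneg {F : ℝ → ℝ} (hF : Monotone F) {x c : ℝ}
    (h : HasDerivAt F c x) : 0 ≤ c := by
  have h1 : Filter.Tendsto (slope F x) (nhdsWithin x {x}ᶜ) (nhds c) :=
    hasDerivAt_iff_tendsto_slope.mp h
  have h2 : Filter.Tendsto (slope F x) (nhdsWithin x (Set.Ioi x)) (nhds c) :=
    h1.mono_left (nhdsWithin_mono x (fun y hy => ne_of_gt hy))
  refine ge_of_tendsto h2 ?_
  filter_upwards [self_mem_nhdsWithin] with y hy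
  rw [slope_def_field]
  have hxy : x < y := hy
  exact div_nonneg (sub_nonneg.mpr (hF hxy.le)) (sub_nonneg.mpr hxy.le)

/-- On an MHR support interval, the cdf stays below 1 before the right endpoint. -/
lemma mhr_F_lt_one (a b : ℝ) (hab : a < b) (F f : ℝ → ℝ)
    (hFmono : Monotone F) (hFcont : Continuous F)
    (hF0 : ∀ x ≤ a, F x = 0) (hF1 : ∀ x, b ≤ x → F x = 1)
    (hderiv : ∀ x ∈ Set.Ico a b, HasDerivAt F (f x) x)
    (hMHR : MonotoneOn (fun x => f x / (1 - F x)) (Set.Ico a b)) :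
    ∀ x ∈ Set.Ico a b, F x < 1 := by
  have hFa : F a = 0 := hF0 a le_rfl
  have hFle1 : ∀ x, F x ≤ 1 := by
    intro x
    rcases le_or_gt b x with h | h
    · exact (hF1 x h).le
    · calc F x ≤ F b := hFmono h.le
        _ = 1 := hF1 b le_rfl
  by_contra hcon
  push_neg at hcon
  obtain ⟨x0', hx0'mem, hx0'⟩ := hcon
  have hFx0' : F x0' = 1 := le_antisymm (hFle1 x0') hx0'
  -- take the infimum of the set where F = 1
  set S : Set ℝ := {x | F x = 1} with hS
  have hSne : S.Nonempty := ⟨x0', hFx0'⟩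
  have hSbdd : BddBelow S := ⟨a, fun x hx => by
    by_contra hax
    push_neg at hax
    have : F x = 0 := hF0 x hax.le
    rw [hx] at this; norm_num at this⟩
  have hSclosed : IsClosed S := isClosed_eq hFcont continuous_const
  set x0 : ℝ := sInf S with hx0def
  have hx0S : x0 ∈ S := hSclosed.csInf_mem hSne hSbdd
  have hx0le : x0 ≤ x0' := csInf_le hSbdd hFx0'
  have hx0ltb : x0 < b := lt_of_le_of_lt hx0le hx0'mem.2
  have halb : a ∈ lowerBounds S := fun x hx => by
    by_contra hax
    push_neg at hax
    have : F x = 0 := hF0 x hax.le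
    rw [hx] at this; norm_num at this
  have hax0 : a < x0 := by
    rcases eq_or_lt_of_le (le_csInf hSne halb) with h | h
    · exfalso
      have : F x0 = 0 := by rw [hx0def, ← h]; exact hFa
      have h1 : F x0 = 1 := hx0S
      rw [this] at h1; norm_num at h1
    · exact h
  -- F < 1 strictly below x0
  have hFlt : ∀ x, a ≤ x → x < x0 → F x < 1 := by
    intro x hax hxx0
    rcases lt_or_ge (F x) 1 with h | h
    · exact h
    · exfalso
      have : F x = 1 := le_antisymm (hFle1 x) h
      exact absurd (csInf_le hSbdd this) (not_le.mpr hxx0)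
  -- pick c in (x0, b); f c = 0 since F ≡ 1 near c
  set c : ℝ := (x0 + b) / 2 with hc
  have hx0c : x0 < c := by simp [hc]; linarith
  have hcb : c < b := by simp [hc]; linarith
  have hcmem : c ∈ Set.Ico a b := ⟨le_of_lt (lt_trans hax0 hx0c), hcb⟩
  have hFone_near : ∀ y ∈ Set.Ioo x0 b, F y = 1 := by
    intro y hy
    exact le_antisymm (hFle1 y) (by rw [← hx0S]; exact hFmono hy.1.le)
  have hfc : f c = 0 := by
    have h1 : HasDerivAt F (f c) c := hderiv c hcmem
    have h2 : HasDerivAt F 0 c := by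
      have : Set.EqOn F (fun _ => (1:ℝ)) (Set.Ioo x0 b) := fun y hy => hFone_near y hy
      have hmem : Set.Ioo x0 b ∈ nhds c := (isOpen_Ioo).mem_nhds ⟨hx0c, hcb⟩
      have := (hasDerivAt_const c (1:ℝ)).congr_of_eventuallyEq
        (Filter.eventuallyEq_of_mem hmem this)
      exact this
    exact h1.unique h2
  have hhc : f c / (1 - F c) = 0 := by rw [hfc]; simp
  -- hazard is ≤ 0 hence = 0 below x0
  have hf0 : ∀ x ∈ Set.Ico a x0, f x = 0 := by
    intro x hx
    have hxmem : x ∈ Set.Ico a b := ⟨hx.1, lt_trans hx.2 hx0ltb⟩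
    have hle : f x / (1 - F x) ≤ 0 := by
      simpa [hhc] using hMHR hxmem hcmem (le_of_lt (lt_trans hx.2 hx0c))
    have hFx1 : F x < 1 := hFlt x hx.1 hx.2
    have hpos : 0 < 1 - F x := by linarith
    have hfnn : 0 ≤ f x := monotone_hasDerivAt_nonneg hFmono (hderiv x hxmem)
    have h0 : f x / (1 - F x) = 0 := le_antisymm hle (div_nonneg hfnn hpos.le)
    rcases div_eq_zero_iff.mp h0 with h | h
    · exact h
    · exact absurd h (ne_of_gt hpos)
  -- hence F is constant 0 on [a, x0], contradicting F x0 = 1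
  have : F x0 = F a := by
    apply constant_of_has_deriv_right_zero (f := F) (hFcont.continuousOn)
    · intro x hx
      have := (hderiv x ⟨hx.1, lt_trans hx.2 hx0ltb⟩)
      rw [hf0 x hx] at this
      exact this.hasDerivWithinAt
    · exact ⟨le_of_lt hax0, le_rfl⟩
  rw [hx0S, hFa] at this
  norm_num at this

/-- **Quantile growth for MHR distributions.**
If `X` is a nonnegative random variable whose cdf `F` (with density `f`, supported on
`[a, b]` with `a ≥ 0`) has monotone hazard rate, then for all real `m ≥ 1` and `d ≥ 1`,
`d · α_m ≥ α_{m^d}` where `α_p = inf {x | F x ≥ 1 - 1/p}`. -/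
theorem mhr_alpha_pow (a b : ℝ) (ha : 0 ≤ a) (hab : a < b) (F f : ℝ → ℝ)
    (hFmono : Monotone F) (hFcont : Continuous F)
    (hF0 : ∀ x ≤ a, F x = 0) (hF1 : ∀ x, b ≤ x → F x = 1)
    (hderiv : ∀ x ∈ Set.Ico a b, HasDerivAt F (f x) x)
    (hMHR : MonotoneOn (fun x => f x / (1 - F x)) (Set.Ico a b))
    (m d : ℝ) (hm : 1 ≤ m) (hd : 1 ≤ d) :
    alphaQ F (m ^ d) ≤ d * alphaQ F m := by
  have hFa : F a = 0 := hF0 a le_rfl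
  have hFnn : ∀ x, 0 ≤ F x := by
    intro x
    rcases le_or_gt x a with h | h
    · exact le_of_eq (hF0 x h).symm
    · rw [← hFa]; exact hFmono h.le
  have hFle1 : ∀ x, F x ≤ 1 := by
    intro x
    rcases le_or_gt b x with h | h
    · exact (hF1 x h).le
    · calc F x ≤ F b := hFmono h.le
        _ = 1 := hF1 b le_rfl
  rcases eq_or_lt_of_le hm with hm1 | hm1
  · -- m = 1 case
    subst hm1
    rw [Real.one_rpow]
    have h0 : alphaQ F 1 = 0 := by
      unfold alphaQ
      have : {x : ℝ | 1 - 1 / 1 ≤ F x} = Set.univ := by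
        ext x; simp [hFnn x]
      rw [this]
      exact Real.sInf_of_not_bddBelow (by simp [bddBelow_def]; intro y; exact ⟨y - 1, by linarith⟩)
    rw [h0]; simp
  -- m > 1 case
  have hm0 : (0:ℝ) < m := lt_trans one_pos hm1
  have hmd1 : (1:ℝ) < m ^ d := Real.one_lt_rpow_iff_of_pos hm0 |>.mpr (Or.inl ⟨hm1, by linarith⟩)
  have hmdpos : (0:ℝ) < m ^ d := lt_trans one_pos hmd1
  -- basic facts about the quantile set for q > 1
  have key : ∀ q : ℝ, 1 < q →
      (IsClosed {x : ℝ | 1 - 1 / q ≤ F x} ∧ {x : ℝ | 1 - 1 / q ≤ F x}.Nonempty ∧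
        a ∈ lowerBounds {x : ℝ | 1 - 1 / q ≤ F x}) := by
    intro q hq
    have hq0 : (0:ℝ) < q := lt_trans one_pos hq
    refine ⟨isClosed_le continuous_const hFcont, ⟨b, ?_⟩, ?_⟩
    · show 1 - 1/q ≤ F b
      rw [hF1 b le_rfl]
      have : 0 < 1/q := by positivity
      linarith
    · intro x hx
      by_contra hax
      push_neg at hax
      have h1 : F x = 0 := hF0 x hax.le
      have h2 : (1:ℝ) - 1/q ≤ 0 := by rw [← h1]; exact hx
      have : 1/q < 1 := by rw [div_lt_one hq0]; exact hq
      linarith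
  obtain ⟨hcl, hne, hlb⟩ := key m hm1
  obtain ⟨hcl', hne', hlb'⟩ := key (m ^ d) hmd1
  set t : ℝ := alphaQ F m with ht
  have htmem : 1 - 1 / m ≤ F t := hcl.csInf_mem hne ⟨a, hlb⟩
  have hat : a ≤ t := le_csInf hne hlb
  have htnn : 0 ≤ t := le_trans ha hat
  have htdt : t ≤ d * t := le_mul_of_one_le_left htnn hd
  -- final goal reduces to F (d * t) ≥ 1 - 1 / m ^ d
  suffices hgoal : 1 - 1 / m ^ d ≤ F (d * t) by
    exact csInf_le ⟨a, hlb'⟩ hgoal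
  rcases le_or_gt b (d * t) with hbig | hsmall
  · rw [hF1 _ hbig]
    have : 0 < 1 / m ^ d := by positivity
    linarith
  -- now d * t < b
  have hFlt1 := mhr_F_lt_one a b hab F f hFmono hFcont hF0 hF1 hderiv hMHR
  have htb : t < b := lt_of_le_of_lt htdt hsmall
  have htmem' : t ∈ Set.Ico a b := ⟨hat, htb⟩
  have hdtmem : d * t ∈ Set.Ico a b := ⟨le_trans hat htdt, hsmall⟩
  have hat' : a < t := by
    rcases eq_or_lt_of_le hat with h | h
    · exfalso
      have : F t = 0 := by rw [← h, hFa]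
      rw [this] at htmem
      have : 1/m < 1 := by rw [div_lt_one hm0]; exact hm1
      linarith
    · exact h
  -- the log-survival function G
  set G : ℝ → ℝ := fun x => -Real.log (1 - F x) with hG
  have hpos : ∀ x ∈ Set.Icc a (d * t), 0 < 1 - F x := by
    intro x hx
    have : F x < 1 := hFlt1 x ⟨hx.1, lt_of_le_of_lt hx.2 hsmall⟩
    linarith
  have hGderiv : ∀ x ∈ Set.Ioo a (d * t), HasDerivAt G (f x / (1 - F x)) x := by
    intro x hx
    have hxI : x ∈ Set.Ico a b := ⟨hx.1.le, lt_trans hx.2 hsmall⟩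
    have h1 : HasDerivAt (fun y => 1 - F y) (-f x) x := by
      have h := ((hasDerivAt_const x (1:ℝ)).sub (hderiv x hxI) : HasDerivAt (fun y => 1 - F y) (0 - f x) x); rwa [zero_sub] at h
    have hne0 : 1 - F x ≠ 0 := ne_of_gt (hpos x ⟨hx.1.le, hx.2.le⟩)
    have h2 := (h1.log hne0).neg
    have : -(-f x / (1 - F x)) = f x / (1 - F x) := by ring
    rw [this] at h2
    exact h2
  have hconv : ConvexOn ℝ (Set.Icc a (d * t)) G := by
    apply MonotoneOn.convexOn_of_deriv (convex_Icc a (d * t))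
    · -- continuity of G on the interval
      apply ContinuousOn.neg
      apply ContinuousOn.log
      · exact (continuous_const.sub hFcont).continuousOn
      · intro x hx; exact ne_of_gt (hpos x hx)
    · rw [interior_Icc]
      intro x hx
      exact ⟨_, (hGderiv x hx).hasDerivWithinAt⟩
    · rw [interior_Icc]
      intro x hx y hy hxy
      rw [(hGderiv x hx).deriv, (hGderiv y hy).deriv]
      exact hMHR ⟨hx.1.le, lt_trans hx.2 hsmall⟩ ⟨hy.1.le, lt_trans hy.2 hsmall⟩ hxy
  have hGa : G a = 0 := by simp [hG, hFa]
  have hGs_nn : 0 ≤ G (d * t) := by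
    have h1 : 1 - F (d * t) ≤ 1 := by have := hFnn (d * t); linarith
    have h2 : Real.log (1 - F (d * t)) ≤ 0 := Real.log_nonpos (by linarith [hpos (d*t) ⟨le_trans hat htdt, le_rfl⟩]) h1
    show 0 ≤ -Real.log (1 - F (d * t))
    linarith
  -- convex combination: t = λ a + μ (d t)
  have hadt : a < d * t := lt_of_lt_of_le hat' htdt
  set μ : ℝ := (t - a) / (d * t - a) with hμ
  set lam : ℝ := (d * t - t) / (d * t - a) with hlam
  have hden : 0 < d * t - a := by linarith
  have hμ0 : 0 ≤ μ := div_nonneg (by linarith) hden.le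
  have hlam0 : 0 ≤ lam := div_nonneg (by linarith) hden.le
  have hsum : lam + μ = 1 := by
    rw [hlam, hμ, ← add_div, div_eq_one_iff_eq hden.ne']; ring
  have hcomb : lam • a + μ • (d * t) = t := by
    simp only [smul_eq_mul, hlam, hμ]
    field_simp
    ring
  have hGt_le : G t ≤ μ * G (d * t) := by
    have := hconv.2 (Set.left_mem_Icc.mpr hadt.le) (Set.right_mem_Icc.mpr hadt.le)
      hlam0 hμ0 hsum
    rw [hcomb] at this
    simpa [hGa] using this
  have hμle : μ ≤ 1 / d := by
    rw [hμ, div_le_div_iff₀ hden (by linarith)]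
    have : a ≤ d * a := le_mul_of_one_le_left ha hd
    nlinarith
  have hd0 : (0:ℝ) < d := lt_of_lt_of_le one_pos hd
  have hGt_logm : Real.log m ≤ G t := by
    have h1 : 1 - F t ≤ 1 / m := by linarith
    have h2 : 0 < 1 - F t := hpos t ⟨hat, htdt⟩
    have h3 : Real.log (1 - F t) ≤ Real.log (1 / m) := Real.log_le_log h2 h1
    rw [Real.log_div one_ne_zero (ne_of_gt hm0), Real.log_one] at h3
    show Real.log m ≤ -Real.log (1 - F t)
    linarith
  have hkey : d * Real.log m ≤ G (d * t) := by
    have h1 : d * G t ≤ d * (μ * G (d * t)) := by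
      apply mul_le_mul_of_nonneg_left hGt_le hd0.le
    have h2 : d * (μ * G (d * t)) ≤ d * (1/d * G (d * t)) := by
      apply mul_le_mul_of_nonneg_left _ hd0.le
      exact mul_le_mul_of_nonneg_right hμle hGs_nn
    have h3 : d * (1/d * G (d * t)) = G (d * t) := by field_simp
    have h4 : d * Real.log m ≤ d * G t := mul_le_mul_of_nonneg_left hGt_logm hd0.le
    calc d * Real.log m ≤ d * G t := h4
      _ ≤ d * (μ * G (d * t)) := h1
      _ ≤ d * (1 / d * G (d * t)) := h2
      _ = G (d * t) := h3
  -- unwind: 1 - F (d t) ≤ m ^ (-d) = 1 / m ^ d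
  have hposdt : 0 < 1 - F (d * t) := hpos (d * t) ⟨le_trans hat htdt, le_rfl⟩
  have hlog : Real.log (1 - F (d * t)) ≤ -(d * Real.log m) := by
    have : d * Real.log m ≤ -Real.log (1 - F (d * t)) := hkey
    linarith
  have hexp : 1 - F (d * t) ≤ Real.exp (-(d * Real.log m)) := by
    calc 1 - F (d * t) = Real.exp (Real.log (1 - F (d * t))) := (Real.exp_log hposdt).symm
      _ ≤ Real.exp (-(d * Real.log m)) := Real.exp_le_exp.mpr hlog
  have hrpow : Real.exp (-(d * Real.log m)) = 1 / m ^ d := by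
    rw [Real.rpow_def_of_pos hm0, one_div, ← Real.exp_neg]
    ring_nf
  rw [hrpow] at hexp
  linarith
end

section
/- Let X be a nonnegative random variable whose distribution is MHR, and define Con[X ≥ x] = ∫_x^∞ t·f(t) dt (the contribution to E[X] from values ≥ x). Then for all m ≥ 2, Con[X ≥ α_m] ≤ 6·α_m/m. -/
open MeasureTheory

/-- **Tail contribution of MHR distributions.**
Let `X` be a nonnegative random variable with MHR cdf `F` and density `f` supported on
`[a, b]` with `a ≥ 0`, and let `Con[X ≥ x] = ∫_x^∞ t · f t dt`.  Then for all `m ≥ 2`,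
`Con[X ≥ α_m] ≤ 6 · α_m / m`. -/
theorem mhr_tail_contribution (a b : ℝ) (ha : 0 ≤ a) (hab : a < b) (F f : ℝ → ℝ)
    (hFmono : Monotone F) (hFcont : Continuous F)
    (hF0 : ∀ x ≤ a, F x = 0) (hF1 : ∀ x, b ≤ x → F x = 1)
    (hderiv : ∀ x ∈ Set.Ico a b, HasDerivAt F (f x) x)
    (hMHR : MonotoneOn (fun x => f x / (1 - F x)) (Set.Ico a b))
    (hfnn : ∀ x, 0 ≤ f x) (hfzero : ∀ x, x ∉ Set.Icc a b → f x = 0)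
    (hfint : ∀ c d : ℝ, IntervalIntegrable f volume c d)
    (m : ℝ) (hm : 2 ≤ m) :
    ∫ t in Set.Ici (alphaQ F m), t * f t ≤ 6 * alphaQ F m / m := by
  have hm0 : (0:ℝ) < m := by linarith
  have hc2 : (1:ℝ)/2 ≤ 1 - 1/m := by
    have : 1/m ≤ 1/2 := by
      rw [div_le_div_iff₀ hm0 (by norm_num)]; linarith
    linarith
  set T : Set ℝ := {x : ℝ | 1 - 1 / m ≤ F x} with hT_def
  set α := alphaQ F m with hα_def
  have hTclosed : IsClosed T := isClosed_le continuous_const hFcont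
  have hTne : T.Nonempty := ⟨b, by simp only [hT_def, Set.mem_setOf_eq, hF1 b le_rfl]; linarith [one_div_nonneg.mpr hm0.le]⟩
  have hTlb : ∀ x ∈ T, a ≤ x := by
    intro x hx
    by_contra hcon
    push_neg at hcon
    have h0 := hF0 x hcon.le
    rw [Set.mem_setOf_eq, h0] at hx
    linarith
  have hmem : α ∈ T := hTclosed.csInf_mem hTne ⟨a, hTlb⟩
  have hαa : a ≤ α := le_csInf hTne hTlb
  have hFα_le : F α ≤ 1 - 1/m := by
    have htd : Filter.Tendsto F (nhdsWithin α (Set.Iio α)) (nhds (F α)) :=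
      (hFcont.tendsto α).mono_left nhdsWithin_le_nhds
    refine le_of_tendsto htd ?_
    filter_upwards [self_mem_nhdsWithin] with x hx
    have hnot : x ∉ T := fun hmem' =>
      absurd (csInf_le ⟨a, hTlb⟩ hmem') (not_le.2 hx)
    rw [hT_def, Set.mem_setOf_eq, not_le] at hnot
    exact hnot.le
  have hFα : F α = 1 - 1/m := le_antisymm hFα_le hmem
  have hSα : 1 - F α = 1/m := by rw [hFα]; ring
  have haα : a < α := by
    rcases lt_or_eq_of_le hαa with h | h
    · exact h
    · exfalso; rw [← h, hF0 a le_rfl] at hFα; linarith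
  have hαb : α < b := by
    by_contra hcon
    push_neg at hcon
    rw [hF1 α hcon] at hFα
    linarith [one_div_pos.mpr hm0]
  have hα0 : 0 < α := lt_of_le_of_lt ha haα
  have hF_le_one : ∀ t, F t ≤ 1 := by
    intro t
    rcases le_or_gt b t with h | h
    · exact (hF1 t h).le
    · rw [← hF1 b le_rfl]; exact hFmono h.le
  have hF_nn : ∀ t, 0 ≤ F t := by
    intro t
    rcases le_or_gt t a with h | h
    · exact (hF0 t h).ge
    · rw [← hF0 a le_rfl]; exact hFmono h.le
  set h := m * f α with hh_def
  have hh_nn : 0 ≤ h := mul_nonneg hm0.le (hfnn α)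
  -- on [a, α], f ≤ h
  have key1 : ∀ t ∈ Set.Icc a α, f t ≤ h := by
    intro t ht
    have hmono := hMHR (Set.mem_Ico.2 ⟨ht.1, lt_of_le_of_lt ht.2 hαb⟩)
      (Set.mem_Ico.2 ⟨hαa, hαb⟩) ht.2
    simp only at hmono
    rw [hSα] at hmono
    have hval : f α / (1/m) = h := by rw [hh_def]; field_simp
    rw [hval] at hmono
    have hSt : 1/m ≤ 1 - F t := by
      have : F t ≤ F α := hFmono ht.2
      rw [hFα] at this; linarith
    have hStpos : 0 < 1 - F t := lt_of_lt_of_le (by positivity) hSt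
    rw [div_le_iff₀ hStpos] at hmono
    have hle1 : 1 - F t ≤ 1 := by linarith [hF_nn t]
    nlinarith
  -- FTC on [a, α]
  have hFTC1 : ∫ t in a..α, f t = F α - F a :=
    intervalIntegral.integral_eq_sub_of_hasDerivAt_of_le hαa hFcont.continuousOn
      (fun x hx => hderiv x ⟨hx.1.le, lt_trans hx.2 hαb⟩) (hfint a α)
  have hhα : 1/2 ≤ h * α := by
    have hle : ∫ t in a..α, f t ≤ ∫ t in a..α, h := by
      apply intervalIntegral.integral_mono_on hαa (hfint a α)
        intervalIntegrable_const
      intro x hx; exact key1 x hx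
    rw [hFTC1, hF0 a le_rfl, intervalIntegral.integral_const, smul_eq_mul] at hle
    rw [hFα] at hle
    nlinarith [mul_nonneg hh_nn ha]
  have hhpos : 0 < h := by nlinarith
  -- on [α, b), f ≥ h * (1-F) and 1 - F > 0
  have key2 : ∀ t ∈ Set.Ico α b, h * (1 - F t) ≤ f t := by
    intro t ht
    have hmono := hMHR (Set.mem_Ico.2 ⟨hαa, hαb⟩)
      (Set.mem_Ico.2 ⟨le_trans hαa ht.1, ht.2⟩) ht.1
    simp only at hmono
    rw [hSα] at hmono
    have hval : f α / (1/m) = h := by rw [hh_def]; field_simp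
    rw [hval] at hmono
    have hSnn : 0 ≤ 1 - F t := by linarith [hF_le_one t]
    rcases eq_or_lt_of_le hSnn with hS0 | hSpos
    · exfalso
      rw [← hS0, div_zero] at hmono
      linarith
    · rw [le_div_iff₀ hSpos] at hmono
      linarith [hmono]
  -- Grönwall: G = (1-F) * exp(h (t - α)) is antitone on [α, b]
  set G : ℝ → ℝ := fun t => (1 - F t) * Real.exp (h * (t - α)) with hG_def
  have hGderiv : ∀ t ∈ Set.Ioo α b,
      HasDerivAt G ((h * (1 - F t) - f t) * Real.exp (h * (t - α))) t := by
    intro t ht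
    have h1 : HasDerivAt (fun t => 1 - F t) (-f t) t :=
      (hderiv t ⟨le_trans hαa ht.1.le, ht.2⟩).const_sub 1
    have h2 : HasDerivAt (fun t : ℝ => Real.exp (h * (t - α)))
        (Real.exp (h * (t - α)) * h) t := by
      have h3 : HasDerivAt (fun t : ℝ => h * (t - α)) h t := by
        simpa using ((hasDerivAt_id t).sub_const α).const_mul h
      exact h3.exp
    have := h1.mul h2
    convert this using 1
    · rfl
    · rfl
    · rfl
    ring
  have hGcont : Continuous G := by
    apply (continuous_const.sub hFcont).mul
    exact Real.continuous_exp.comp (continuous_const.mul (continuous_id.sub continuous_const))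
  have hGanti : AntitoneOn G (Set.Icc α b) := by
    apply antitoneOn_of_deriv_nonpos (convex_Icc α b) hGcont.continuousOn
    · rw [interior_Icc]
      intro x hx
      exact (hGderiv x hx).differentiableAt.differentiableWithinAt
    · rw [interior_Icc]
      intro x hx
      rw [(hGderiv x hx).deriv]
      have hk := key2 x ⟨hx.1.le, hx.2⟩
      have he := Real.exp_pos (h * (x - α))
      nlinarith
  have htail : ∀ t ∈ Set.Icc α b, 1 - F t ≤ (1/m) * Real.exp (-(h * (t - α))) := by
    intro t ht
    have hG := hGanti (Set.left_mem_Icc.2 hαb.le) ht ht.1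
    have hGα : G α = 1/m := by
      simp only [hG_def, sub_self, mul_zero, Real.exp_zero, mul_one, hSα]
    rw [hGα] at hG
    have hE := Real.exp_pos (h * (t - α))
    rw [Real.exp_neg]
    rw [hG_def] at hG
    simp only at hG
    rw [mul_comm, ← div_eq_inv_mul, le_div_iff₀ hE]
    exact hG
  -- interval integrability
  have hint_tf : IntervalIntegrable (fun t => t * f t) volume α b :=
    (hfint α b).continuousOn_mul continuous_id.continuousOn
  have hint_S : IntervalIntegrable (fun t => 1 - F t) volume α b :=
    (continuous_const.sub hFcont).intervalIntegrable α b
  -- exponential integral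
  set P : ℝ → ℝ := fun t => -(1/h) * Real.exp (-(h * (t - α))) with hP_def
  have hPderiv : ∀ t : ℝ, HasDerivAt P (Real.exp (-(h * (t - α)))) t := by
    intro t
    have h3 : HasDerivAt (fun t : ℝ => -(h * (t - α))) (-h) t := by
      have h5 := ((hasDerivAt_id t).sub_const α).const_mul h
      simp only [id_eq, mul_one] at h5
      exact h5.neg
    have h4 := (h3.exp).const_mul (-(1/h))
    convert h4 using 1
    · rfl
    · rfl
    field_simp
  have hEcont : Continuous (fun t : ℝ => Real.exp (-(h * (t - α)))) :=
    Real.continuous_exp.comp (continuous_const.mul (continuous_id.sub continuous_const)).neg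
  have hEint : ∫ t in α..b, Real.exp (-(h * (t - α))) = P b - P α :=
    intervalIntegral.integral_eq_sub_of_hasDerivAt (fun t _ => hPderiv t)
      (hEcont.intervalIntegrable α b)
  have hPle : P b - P α ≤ 1/h := by
    have h1 : P α = -(1/h) := by simp [hP_def]
    have h2 : 0 < Real.exp (-(h * (b - α))) := Real.exp_pos _
    have h3 : 0 < 1/h := by positivity
    simp only [hP_def, sub_self, mul_zero, neg_zero, Real.exp_zero, mul_one]
    nlinarith [mul_pos h3 h2]
  have hSle : ∫ t in α..b, (1 - F t) ≤ 2*α/m := by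
    have h1 : ∫ t in α..b, (1 - F t) ≤ ∫ t in α..b, (1/m) * Real.exp (-(h * (t - α))) := by
      apply intervalIntegral.integral_mono_on hαb.le hint_S
        ((continuous_const.mul hEcont).intervalIntegrable α b)
      intro x hx; exact htail x hx
    rw [intervalIntegral.integral_const_mul, hEint] at h1
    have h2 : (1/m) * (P b - P α) ≤ (1/m) * (1/h) :=
      mul_le_mul_of_nonneg_left hPle (by positivity)
    have h3 : (1/m) * (1/h) ≤ 2*α/m := by
      rw [div_mul_div_comm, one_mul, div_le_div_iff₀ (by positivity) hm0]
      nlinarith [mul_le_mul_of_nonneg_left hhα hm0.le]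
    linarith
  -- integration by parts
  have hIBP : ∫ t in α..b, (t * f t - (1 - F t)) = α / m := by
    have hd : ∀ t ∈ Set.Ioo α b, HasDerivAt (fun t => t * F t - t) (t * f t - (1 - F t)) t := by
      intro t ht
      have h1 := ((hasDerivAt_id t).mul (hderiv t ⟨le_trans hαa ht.1.le, ht.2⟩)).sub
        (hasDerivAt_id t)
      simp only [id_eq, one_mul] at h1
      convert h1 using 1
      · rfl
      · rfl
      · rfl
      ring
    have hcont : ContinuousOn (fun t => t * F t - t) (Set.Icc α b) :=
      ((continuous_id.mul hFcont).sub continuous_id).continuousOn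
    rw [intervalIntegral.integral_eq_sub_of_hasDerivAt_of_le hαb.le hcont hd
      (hint_tf.sub hint_S)]
    rw [hF1 b le_rfl, hFα]
    field_simp
    ring
  have hsplit : ∫ t in α..b, t * f t = α/m + ∫ t in α..b, (1 - F t) := by
    have h1 := intervalIntegral.integral_sub hint_tf hint_S
    rw [hIBP] at h1
    linarith
  -- reduce the set integral to the interval integral
  have hred : ∫ t in Set.Ici α, t * f t = ∫ t in α..b, t * f t := by
    have h1 : ∫ t in Set.Ici α, t * f t
        = ∫ t in Set.Ici α, (Set.Icc α b).indicator (fun t => t * f t) t := by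
      apply setIntegral_congr_fun measurableSet_Ici
      intro t ht
      rcases le_or_gt t b with hb' | hb'
      · simp [Set.indicator_of_mem (Set.mem_Icc.2 ⟨ht, hb'⟩)]
      · have hnot : t ∉ Set.Icc α b := fun hmem => absurd hmem.2 (not_le.2 hb')
        have hnot' : t ∉ Set.Icc a b := fun hmem => absurd hmem.2 (not_le.2 hb')
        have hft : f t = 0 := hfzero t hnot'
        simp [Set.indicator_of_notMem hnot, hft]
    rw [h1, setIntegral_indicator measurableSet_Icc,
      Set.inter_eq_self_of_subset_right Set.Icc_subset_Ici_self,
      integral_Icc_eq_integral_Ioc, ← intervalIntegral.integral_of_le hαb.le]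
  rw [hred, hsplit]
  have e1 : 2*α/m = 2*(α/m) := by ring
  have e2 : 6*α/m = 6*(α/m) := by ring
  have e3 : 0 ≤ α/m := by positivity
  linarith
end

section
/- Let X_1,...,X_n be independent (not necessarily identically distributed) random variables with MHR distributions. Then there exists an anchoring point β > 0 such that Pr[max_i X_i ≥ β/2] ≥ 1 - 1/√e, and for all ε ∈ (0, 1/4), ∫_{2β log(1/ε)}^∞ t · f_{max_i X_i}(t) dt ≤ 36·β·ε·log(1/ε). -/
set_option maxHeartbeats 1000000

open MeasureTheory Set Filter Topology

lemma aux_deriv_nonneg {F : ℝ → ℝ} {d x : ℝ} (hM : Monotone F)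
    (h : HasDerivAt F d x) : 0 ≤ d := by
  have h1 : Tendsto (slope F x) (𝓝[>] x) (𝓝 d) :=
    (hasDerivAt_iff_tendsto_slope.1 h).mono_left
      (nhdsWithin_mono x fun y hy => ne_of_gt hy)
  refine ge_of_tendsto h1 ?_
  filter_upwards [self_mem_nhdsWithin] with y hy
  rw [slope_def_field]
  exact div_nonneg (sub_nonneg.2 (hM (le_of_lt hy))) (sub_nonneg.2 (le_of_lt hy))

lemma aux_one_sub_prod_le_sum {ι : Type*} (s : Finset ι) (g : ι → ℝ)
    (h0 : ∀ i ∈ s, 0 ≤ g i) (h1 : ∀ i ∈ s, g i ≤ 1) :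
    1 - ∏ i ∈ s, g i ≤ ∑ i ∈ s, (1 - g i) := by
  classical
  induction s using Finset.induction with
  | empty => simp
  | @insert j s hj ih =>
    rw [Finset.prod_insert hj, Finset.sum_insert hj]
    have h0' : ∀ i ∈ s, 0 ≤ g i := fun i hi => h0 i (Finset.mem_insert_of_mem hi)
    have h1' : ∀ i ∈ s, g i ≤ 1 := fun i hi => h1 i (Finset.mem_insert_of_mem hi)
    have hps : ∏ i ∈ s, g i ≤ 1 := Finset.prod_le_one h0' h1'
    have hj0 : 0 ≤ g j := h0 j (Finset.mem_insert_self j s)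
    have hj1 : g j ≤ 1 := h1 j (Finset.mem_insert_self j s)
    have := ih h0' h1'
    nlinarith [this]


lemma aux_lt_one {F f : ℝ → ℝ} {A B : ℝ} (hAB : A < B) (hM : Monotone F)
    (hc : Continuous F) (h0 : ∀ x ≤ A, F x = 0) (h1 : ∀ x, B ≤ x → F x = 1)
    (hd : ∀ x, HasDerivAt F (f x) x)
    (hmhr : MonotoneOn (fun x => f x / (1 - F x)) (Set.Ico A B))
    {x : ℝ} (hx : x ∈ Set.Ico A B) : F x < 1 := by
  have hFle1 : ∀ y, F y ≤ 1 := by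
    intro y
    rcases le_total y B with h | h
    · calc F y ≤ F B := hM h
      _ = 1 := h1 B le_rfl
    · exact (h1 y h).le
  rcases lt_or_eq_of_le (hFle1 x) with h | hFx
  · exact h
  exfalso
  -- F x = 1 with x ∈ [A, B)
  have hFA : F A = 0 := h0 A le_rfl
  have hxA : A < x := lt_of_le_of_ne hx.1 (fun h => by rw [← h, hFA] at hFx; norm_num at hFx)
  set S : Set ℝ := {y | y ∈ Set.Icc A x ∧ F y = 1} with hS
  have hSne : S.Nonempty := ⟨x, ⟨hx.1, le_rfl⟩, hFx⟩
  have hSbdd : BddBelow S := ⟨A, fun y hy => hy.1.1⟩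
  have hSclosed : IsClosed S := by
    have : S = Set.Icc A x ∩ F ⁻¹' {1} := by
      ext y; simp [hS, Set.mem_Icc, and_comm]
    rw [this]
    exact isClosed_Icc.inter (isClosed_singleton.preimage hc)
  set y0 := sInf S with hy0
  have hy0mem : y0 ∈ S := hSclosed.csInf_mem hSne hSbdd
  have hy0A : A < y0 := by
    refine lt_of_le_of_ne hy0mem.1.1 fun h => ?_
    have := hy0mem.2
    rw [← h, hFA] at this
    norm_num at this
  have hflt : ∀ y ∈ Set.Ico A y0, F y < 1 := by
    intro y hy
    rcases lt_or_eq_of_le (hFle1 y) with h | h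
    · exact h
    · exfalso
      have : y ∈ S := ⟨⟨hy.1, le_of_lt (lt_of_lt_of_le hy.2 hy0mem.1.2)⟩, h⟩
      exact absurd (csInf_le hSbdd this) (not_le.2 hy.2)
  have hf0 : ∀ y ∈ Set.Ico A y0, f y = 0 := by
    intro y hy
    have hyB : y ∈ Set.Ico A B := ⟨hy.1, lt_of_lt_of_le hy.2 (hy0mem.1.2.trans hx.2.le)⟩
    have hle : f y / (1 - F y) ≤ f x / (1 - F x) :=
      hmhr hyB hx (hy.2.le.trans hy0mem.1.2)
    rw [show (1 : ℝ) - F x = 0 by rw [hFx]; ring, div_zero] at hle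
    have hpos : 0 < 1 - F y := by linarith [hflt y hy]
    have hge : 0 ≤ f y / (1 - F y) :=
      div_nonneg (aux_deriv_nonneg hM (hd y)) hpos.le
    have : f y / (1 - F y) = 0 := le_antisymm hle hge
    rcases div_eq_zero_iff.1 this with h | h
    · exact h
    · linarith
  have hconst := constant_of_has_deriv_right_zero (f := F) (a := A) (b := y0)
    hc.continuousOn (fun y hy => by
      have := (hd y).hasDerivWithinAt (s := Set.Ici y)
      rwa [hf0 y hy] at this)
  have := hconst y0 ⟨hy0A.le, le_rfl⟩
  rw [hy0mem.2, hFA] at this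
  norm_num at this


/-- tail bound for a single MHR variable -/
lemma aux_tail {F f : ℝ → ℝ} {A B : ℝ} (hAB : A < B) (hA0 : 0 ≤ A) (hM : Monotone F)
    (hc : Continuous F) (h0 : ∀ x ≤ A, F x = 0) (h1 : ∀ x, B ≤ x → F x = 1)
    (hd : ∀ x, HasDerivAt F (f x) x)
    (hmhr : MonotoneOn (fun x => f x / (1 - F x)) (Set.Ico A B))
    {q : ℝ} (hq0 : 0 < q) (hFq : 0 < F q)
    {t : ℝ} (hqt : q ≤ t) : 1 - F t ≤ (1 - F q) ^ (t / q) := by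
  have hFle1 : ∀ y, F y ≤ 1 := by
    intro y
    rcases le_total y B with h | h
    · calc F y ≤ F B := hM h
      _ = 1 := h1 B le_rfl
    · exact (h1 y h).le
  have hF0le : ∀ y, 0 ≤ F y := by
    intro y
    rcases le_total y A with h | h
    · exact (h0 y h).ge
    · calc (0:ℝ) = F A := (h0 A le_rfl).symm
      _ ≤ F y := hM h
  have hAq : A < q := by
    by_contra h
    rw [h0 q (not_lt.1 h)] at hFq
    exact lt_irrefl 0 hFq
  -- trivial case : t ≥ B
  rcases le_or_gt B t with hBt | htB
  · rw [h1 t hBt]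
    simpa using Real.rpow_nonneg (by linarith [hFle1 q] : (0:ℝ) ≤ 1 - F q) (t / q)
  -- now  t ∈ [q, B) ⊆ Ico A B
  have htmem : t ∈ Set.Ico A B := ⟨hAq.le.trans hqt, htB⟩
  have hqB : q < B := lt_of_le_of_lt hqt htB
  have hqmem : q ∈ Set.Ico A B := ⟨hAq.le, hqB⟩
  have hSpos : ∀ y ∈ Set.Ico A B, 0 < 1 - F y := fun y hy => by
    linarith [aux_lt_one hAB hM hc h0 h1 hd hmhr hy]
  -- concavity of log (1 - F)
  set φ : ℝ → ℝ := fun y => Real.log (1 - F y) with hφ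
  have hder : ∀ y, 1 - F y ≠ 0 → HasDerivAt φ (-f y / (1 - F y)) y := fun y hy =>
    (((hd y).const_sub 1).log hy)
  have hconc : ConcaveOn ℝ (Set.Ico A B) φ := by
    apply AntitoneOn.concaveOn_of_deriv (convex_Ico A B)
    · apply ContinuousOn.log ((continuous_const.sub hc).continuousOn)
      exact fun y hy => (hSpos y hy).ne'
    · rw [interior_Ico]
      intro y hy
      exact ((hder y (hSpos y (Set.Ioo_subset_Ico_self hy)).ne').differentiableAt).differentiableWithinAt
    · rw [interior_Ico]
      intro y hy z hz hyz
      rw [(hder y (hSpos y (Set.Ioo_subset_Ico_self hy)).ne').deriv,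
        (hder z (hSpos z (Set.Ioo_subset_Ico_self hz)).ne').deriv]
      rw [neg_div, neg_div, neg_le_neg_iff]
      exact hmhr (Set.Ioo_subset_Ico_self hy) (Set.Ioo_subset_Ico_self hz) hyz
  -- case t = q
  rcases eq_or_lt_of_le hqt with rfl | hqt'
  · rw [div_self hq0.ne', Real.rpow_one]
  -- chord inequality
  have hwA : (0:ℝ) ≤ (t - q) / (t - A) := by
    apply div_nonneg <;> linarith
  have hwt : (0:ℝ) ≤ (q - A) / (t - A) := by
    apply div_nonneg <;> linarith
  have hne : t - A ≠ 0 := by linarith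
  have hsum : (t - q) / (t - A) + (q - A) / (t - A) = 1 := by
    field_simp
    ring
  have hchord := hconc.2 (Set.left_mem_Ico.2 hAB) htmem hwA hwt hsum
  have hcomb : (t - q) / (t - A) * A + (q - A) / (t - A) * t = q := by
    field_simp
    ring
  rw [smul_eq_mul, smul_eq_mul, smul_eq_mul, smul_eq_mul, hcomb] at hchord
  have hφA : φ A = 0 := by
    rw [hφ]; simp [h0 A le_rfl]
  rw [hφA, mul_zero, zero_add] at hchord
  -- hchord : (q - A)/(t - A) * φ t ≤ φ q
  have hμ : 0 < (q - A) / (t - A) := by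
    apply div_pos <;> linarith
  have hφt : φ t ≤ φ q * ((t - A) / (q - A)) := by
    have hμ' : (0:ℝ) < (t - A) / (q - A) := div_pos (by linarith) (by linarith)
    have h2 := mul_le_mul_of_nonneg_left hchord hμ'.le
    rw [← mul_assoc, show (t - A) / (q - A) * ((q - A) / (t - A)) = 1 by
      rw [div_mul_div_comm, div_eq_one_iff_eq (mul_ne_zero (sub_ne_zero.2 hAq.ne') hne)]; ring, one_mul] at h2
    rw [mul_comm]
    exact h2
  have hφq : φ q ≤ 0 := Real.log_nonpos (by linarith [hSpos q hqmem]) (by linarith [hF0le q])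
  have hratio : t / q ≤ (t - A) / (q - A) := by
    rw [div_le_div_iff₀ hq0 (by linarith)]
    nlinarith
  have hφt2 : φ t ≤ (t / q) * φ q := by
    calc φ t ≤ φ q * ((t - A) / (q - A)) := hφt
    _ ≤ φ q * (t / q) := by
        apply mul_le_mul_of_nonpos_left hratio hφq
    _ = (t / q) * φ q := mul_comm _ _
  calc 1 - F t = Real.exp (φ t) := (Real.exp_log (hSpos t htmem)).symm
  _ ≤ Real.exp ((t / q) * φ q) := Real.exp_le_exp.2 hφt2
  _ = (1 - F q) ^ (t / q) := by
      rw [Real.rpow_def_of_pos (hSpos q hqmem), mul_comm]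


/-- **Extreme value theorem for MHR distributions.**
Let `X_1, …, X_n` be independent (not necessarily identically distributed) nonnegative
random variables, where `X i` has cdf `F i` with density `f i` supported on `[a i, b i]`
and monotone hazard rate.  Then there is an anchoring point `β > 0` such that
`Pr[max_i X_i ≥ β/2] ≥ 1 - 1/√e` (here `Pr[max_i X_i ≥ c] = 1 - ∏ i, F i c`), and for
every `ε ∈ (0, 1/4)`,
`∫_{2β log(1/ε)}^∞ t · f_max t dt ≤ 36 β ε log(1/ε)`,
where `f_max t = ∑ i, f i t * ∏_{j ≠ i} F j t` is the density of `max_i X_i`. -/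
theorem mhr_extreme_value (n : ℕ) (hn : 0 < n) (a b : Fin n → ℝ)
    (ha : ∀ i, 0 ≤ a i) (hab : ∀ i, a i < b i)
    (F f : Fin n → ℝ → ℝ)
    (hFmono : ∀ i, Monotone (F i)) (hFcont : ∀ i, Continuous (F i))
    (hF0 : ∀ i, ∀ x ≤ a i, F i x = 0) (hF1 : ∀ i x, b i ≤ x → F i x = 1)
    (hderiv : ∀ i x, HasDerivAt (F i) (f i x) x)
    (hMHR : ∀ i, MonotoneOn (fun x => f i x / (1 - F i x)) (Set.Ico (a i) (b i))) :
    ∃ β : ℝ, 0 < β ∧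
      1 - (Real.sqrt (Real.exp 1))⁻¹ ≤ 1 - ∏ i, F i (β / 2) ∧
      ∀ ε ∈ Set.Ioo (0 : ℝ) (1 / 4),
        ∫ t in Set.Ici (2 * β * Real.log (1 / ε)),
            t * (∑ i, f i t * ∏ j ∈ Finset.univ.erase i, F j t)
          ≤ 36 * β * ε * Real.log (1 / ε) := by
  classical
  have huniv : (Finset.univ : Finset (Fin n)).Nonempty := ⟨⟨0, hn⟩, Finset.mem_univ _⟩
  set i0 : Fin n := ⟨0, hn⟩ with hi0
  have hFle1 : ∀ i y, F i y ≤ 1 := by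
    intro i y
    rcases le_total y (b i) with h | h
    · exact (hFmono i h).trans (hF1 i (b i) le_rfl).le
    · exact (hF1 i y h).le
  have hF0le : ∀ i y, 0 ≤ F i y := by
    intro i y
    rcases le_total y (a i) with h | h
    · exact (hF0 i y h).ge
    · calc (0:ℝ) = F i (a i) := (hF0 i (a i) le_rfl).symm
      _ ≤ F i y := hFmono i h
  set G : ℝ → ℝ := fun x => ∏ i, F i x with hGdef
  have hGcont : Continuous G := continuous_finset_prod _ fun i _ => hFcont i
  set B0 : ℝ := Finset.univ.sup' huniv b with hB0
  have hbB0 : ∀ i, b i ≤ B0 := fun i => Finset.le_sup' b (Finset.mem_univ i)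
  have hGone : ∀ x, B0 ≤ x → G x = 1 := by
    intro x hx
    rw [hGdef]
    exact Finset.prod_eq_one fun i _ => hF1 i x ((hbB0 i).trans hx)
  have hGa : G (a i0) = 0 := Finset.prod_eq_zero (Finset.mem_univ i0) (hF0 i0 _ le_rfl)
  have hcB0 : a i0 ≤ B0 := (hab i0).le.trans (hbB0 i0)
  have hmem : Real.exp (-(1/2)) ∈ Set.Icc (G (a i0)) (G B0) := by
    rw [hGa, hGone B0 le_rfl]
    exact ⟨(Real.exp_pos _).le, Real.exp_le_one_iff.2 (by norm_num)⟩
  obtain ⟨q, hqmem, hGq⟩ := intermediate_value_Icc hcB0 hGcont.continuousOn hmem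
  have hq0 : 0 < q := by
    refine lt_of_le_of_ne ((ha i0).trans hqmem.1) fun h => ?_
    have hG0 : G 0 = 0 := Finset.prod_eq_zero (Finset.mem_univ i0) (hF0 i0 0 (ha i0))
    rw [← h, hG0] at hGq
    exact absurd hGq.symm (Real.exp_pos _).ne'
  have hFqi : ∀ i, Real.exp (-(1/2)) ≤ F i q := by
    intro i
    have h1 : G q = F i q * ∏ j ∈ Finset.univ.erase i, F j q :=
      (Finset.mul_prod_erase Finset.univ (fun j => F j q) (Finset.mem_univ i)).symm
    have h2 : ∏ j ∈ Finset.univ.erase i, F j q ≤ 1 :=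
      Finset.prod_le_one (fun j _ => hF0le j q) (fun j _ => hFle1 j q)
    calc Real.exp (-(1/2)) = G q := hGq.symm
    _ = F i q * ∏ j ∈ Finset.univ.erase i, F j q := h1
    _ ≤ F i q * 1 := mul_le_mul_of_nonneg_left h2 (hF0le i q)
    _ = F i q := mul_one _
  have hFqpos : ∀ i, 0 < F i q := fun i => lt_of_lt_of_le (Real.exp_pos _) (hFqi i)
  have hexphalf2 : Real.exp (1/2) ≤ 2 := by
    have hsq : Real.exp (1/2) * Real.exp (1/2) = Real.exp 1 := by
      rw [← Real.exp_add]; norm_num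
    nlinarith [Real.exp_one_lt_d9, Real.exp_pos (1/2:ℝ), sq_nonneg (Real.exp (1/2) - 2)]
  have hexphalf : (1:ℝ)/2 ≤ Real.exp (-(1/2)) := by
    rw [Real.exp_neg]
    have h := inv_anti₀ (Real.exp_pos (1/2:ℝ)) hexphalf2
    calc (1:ℝ)/2 = 2⁻¹ := by norm_num
    _ ≤ (Real.exp (1/2))⁻¹ := h
  have hsplitpow : ∀ (x y : ℝ), 0 < x → x ^ (y:ℝ) = x * x ^ (y - 1) := by
    intro x y hx
    have h := (Real.rpow_add hx 1 (y - 1)).symm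
    rw [Real.rpow_one] at h
    calc x ^ y = x ^ (1 + (y - 1)) := by congr 1; ring
    _ = x * x ^ (y - 1) := h.symm
  have hsqrt : (Real.sqrt (Real.exp 1))⁻¹ = Real.exp (-(1/2)) := by
    rw [show Real.exp 1 = Real.exp (1/2) ^ 2 by rw [sq, ← Real.exp_add]; norm_num,
      Real.sqrt_sq (Real.exp_nonneg _), ← Real.exp_neg]
  refine ⟨2 * q, by linarith, ?_, ?_⟩
  · rw [show 2 * q / 2 = q by ring, hsqrt]
    have : (∏ i, F i q) = Real.exp (-(1/2)) := hGq
    rw [this]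
  intro ε hε
  obtain ⟨hε0, hε4⟩ := hε
  set L : ℝ := Real.log (1/ε) with hLdef
  have hlogε : Real.log ε = -L := by rw [hLdef, one_div, Real.log_inv, neg_neg]
  have hL1 : 1 < L := by
    have h4 : (4:ℝ) ≤ 1/ε := by rw [le_div_iff₀ hε0]; linarith
    have hlog4 : Real.log 4 ≤ L := Real.log_le_log (by norm_num) h4
    have : Real.log 4 = 2 * Real.log 2 := by
      rw [show (4:ℝ) = 2^2 by norm_num, Real.log_pow]; push_cast; ring
    nlinarith [Real.log_two_gt_d9]
  have hLpos : 0 < L := by linarith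
  set T : ℝ := 2 * (2 * q) * L with hTdef
  have hqT : q ≤ T := by nlinarith
  have hT0 : 0 ≤ T := by nlinarith
  set c : ℝ := Real.log 2 / q with hcdef
  have hlog2pos : (0:ℝ) < Real.log 2 := by nlinarith [Real.log_two_gt_d9]
  have hcpos : 0 < c := div_pos hlog2pos hq0
  -- tail bound
  have hsum1 : ∑ i, (1 - F i q) ≤ 1/2 := by
    have hlog : ∑ i, Real.log (F i q) = -(1/2) := by
      rw [← Real.log_prod fun i _ => (hFqpos i).ne']
      have : (∏ i, F i q) = Real.exp (-(1/2)) := hGq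
      rw [this, Real.log_exp]
    have hterm : ∀ i ∈ Finset.univ, 1 - F i q ≤ -Real.log (F i q) := fun i _ => by
      have := Real.log_le_sub_one_of_pos (hFqpos i); linarith
    calc ∑ i, (1 - F i q) ≤ ∑ i, -Real.log (F i q) := Finset.sum_le_sum hterm
    _ = -∑ i, Real.log (F i q) := by rw [Finset.sum_neg_distrib]
    _ = 1/2 := by rw [hlog]; ring
  have htail : ∀ t, q ≤ t → 1 - G t ≤ Real.exp (-(c * t)) := by
    intro t hqt
    have e1 : (1:ℝ) ≤ t/q := (one_le_div hq0).2 hqt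
    have htaili : ∀ i, 1 - F i t ≤ (1 - F i q) ^ (t/q) := fun i =>
      aux_tail (hab i) (ha i) (hFmono i) (hFcont i) (hF0 i) (hF1 i) (hderiv i)
        (hMHR i) hq0 (hFqpos i) hqt
    have hsi : ∀ i, 1 - F i q ≤ 1/2 := fun i => by linarith [hFqi i, hexphalf]
    have step : ∀ i, (1 - F i q) ^ (t/q) ≤ (1 - F i q) * (1/2:ℝ) ^ (t/q - 1) := by
      intro i
      rcases eq_or_lt_of_le (show (0:ℝ) ≤ 1 - F i q by linarith [hFle1 i q]) with h | h
      · rw [← h, Real.zero_rpow (by positivity : t/q ≠ 0), zero_mul]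
      · calc (1 - F i q) ^ (t/q) = (1 - F i q) * (1 - F i q) ^ (t/q - 1) :=
              hsplitpow _ _ h
        _ ≤ (1 - F i q) * (1/2:ℝ) ^ (t/q - 1) :=
            mul_le_mul_of_nonneg_left
              (Real.rpow_le_rpow h.le (hsi i) (by linarith)) h.le
    have hhalf : (0:ℝ) < 1/2 := by norm_num
    calc 1 - G t ≤ ∑ i, (1 - F i t) :=
          aux_one_sub_prod_le_sum Finset.univ (fun i => F i t)
            (fun i _ => hF0le i t) (fun i _ => hFle1 i t)
    _ ≤ ∑ i, (1 - F i q) ^ (t/q) := Finset.sum_le_sum fun i _ => htaili i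
    _ ≤ ∑ i, (1 - F i q) * (1/2:ℝ) ^ (t/q - 1) := Finset.sum_le_sum fun i _ => step i
    _ = (∑ i, (1 - F i q)) * (1/2:ℝ) ^ (t/q - 1) := (Finset.sum_mul _ _ _).symm
    _ ≤ (1/2) * (1/2:ℝ) ^ (t/q - 1) :=
        mul_le_mul_of_nonneg_right hsum1 (Real.rpow_nonneg (by norm_num) _)
    _ = (1/2:ℝ) ^ (t/q) := (hsplitpow _ _ hhalf).symm
    _ = Real.exp (-(c * t)) := by
        rw [Real.rpow_def_of_pos hhalf]
        congr 1
        rw [show (1/2:ℝ) = 2⁻¹ by norm_num, Real.log_inv, hcdef]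
        field_simp
  -- density vanishes beyond B0
  have hfzero : ∀ i t, b i < t → f i t = 0 := by
    intro i t hbt
    have hev : F i =ᶠ[𝓝 t] fun _ => 1 := by
      filter_upwards [Ioi_mem_nhds hbt] with y hy
      exact hF1 i y (le_of_lt hy)
    exact (hderiv i t).unique ((hasDerivAt_const t (1:ℝ)).congr_of_eventuallyEq hev)
  set g : ℝ → ℝ := fun t => ∑ i, f i t * ∏ j ∈ Finset.univ.erase i, F j t with hgdef
  have hgderiv : ∀ t, HasDerivAt G (g t) t := by
    intro t
    have h1 := HasDerivAt.fun_finsetProd (u := Finset.univ) (f := fun i x => F i x)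
      (f' := fun i => f i t) (x := t) (fun i _ => hderiv i t)
    have h2 : g t = ∑ i, (∏ j ∈ Finset.univ.erase i, F j t) • f i t :=
      Finset.sum_congr rfl fun i _ => by rw [smul_eq_mul, mul_comm]
    rw [hgdef] at h2 ⊢
    rw [h2]
    exact h1
  set B1 : ℝ := max T B0 with hB1
  have hTB1 : T ≤ B1 := le_max_left _ _
  have hGB1 : G B1 = 1 := hGone B1 (le_max_right _ _)
  have hgzero : ∀ t, B1 < t → g t = 0 := by
    intro t ht
    rw [hgdef]
    refine Finset.sum_eq_zero fun i _ => ?_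
    rw [hfzero i t (lt_of_le_of_lt ((hbB0 i).trans (le_max_right T B0)) ht), zero_mul]
  by_cases hInt : IntegrableOn (fun t => t * g t) (Set.Ici T) volume
  swap
  · rw [MeasureTheory.integral_undef hInt]
    have h36 : (0:ℝ) < 36 * (2*q) * ε * L := by positivity
    linarith
  -- FTC setup
  have hΦ : ∀ t, HasDerivAt (fun t => t * (G t - 1)) ((G t - 1) + t * g t) t := by
    intro t
    have := (hasDerivAt_id t).mul ((hgderiv t).sub_const 1)
    refine this.congr_deriv ?_
    simp only [id_eq]
    ring
  have intInt : IntervalIntegrable (fun t => t * g t) volume T B1 := by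
    rw [intervalIntegrable_iff, Set.uIoc_of_le hTB1]
    exact hInt.mono_set fun x hx => le_of_lt hx.1
  have contInt : IntervalIntegrable (fun t => G t - 1) volume T B1 :=
    (hGcont.sub continuous_const).intervalIntegrable T B1
  have hFTC := intervalIntegral.integral_eq_sub_of_hasDerivAt
    (f := fun t => t * (G t - 1)) (f' := fun t => (G t - 1) + t * g t)
    (fun t _ => hΦ t) (contInt.add intInt)
  rw [intervalIntegral.integral_add contInt intInt] at hFTC
  set I1 : ℝ := ∫ t in T..B1, (1 - G t) with hI1
  have hneg : (∫ t in T..B1, (G t - 1)) = -I1 := by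
    rw [hI1, ← intervalIntegral.integral_neg]
    congr 1
    funext t
    ring
  rw [hneg] at hFTC
  have hmain : (∫ t in T..B1, t * g t) = T * (1 - G T) + I1 := by
    have h2 : B1 * (G B1 - 1) - T * (G T - 1) = T * (1 - G T) := by rw [hGB1]; ring
    linarith [hFTC, h2]
  -- bound I1
  have hJderiv : ∀ t, HasDerivAt (fun t => -(1/c) * Real.exp (-(c*t)))
      (Real.exp (-(c*t))) t := by
    intro t
    have h1 : HasDerivAt (fun t : ℝ => -(c*t)) (-c) t := by
      simpa using ((hasDerivAt_id t).const_mul c).fun_neg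
    have h2 := (h1.exp).const_mul (-(1/c))
    refine h2.congr_deriv ?_
    field_simp
  have hJ := intervalIntegral.integral_eq_sub_of_hasDerivAt
    (f := fun t => -(1/c) * Real.exp (-(c*t))) (f' := fun t => Real.exp (-(c*t)))
    (fun t _ => hJderiv t)
    ((Real.continuous_exp.comp (continuous_const.mul continuous_id).neg).intervalIntegrable T B1)
  have hI1le : I1 ≤ (1/c) * Real.exp (-(c*T)) := by
    have hmono : I1 ≤ ∫ t in T..B1, Real.exp (-(c*t)) := by
      rw [hI1]
      apply intervalIntegral.integral_mono_on hTB1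
        ((continuous_const.sub hGcont).intervalIntegrable T B1)
        ((Real.continuous_exp.comp (continuous_const.mul continuous_id).neg).intervalIntegrable T B1)
      intro t ht
      exact htail t (hqT.trans ht.1)
    rw [hJ] at hmono
    have : Real.exp (-(c*B1)) > 0 := Real.exp_pos _
    calc I1 ≤ -(1/c) * Real.exp (-(c*B1)) - -(1/c) * Real.exp (-(c*T)) := hmono
    _ ≤ (1/c) * Real.exp (-(c*T)) := by
        have h1c : (0:ℝ) < 1/c := one_div_pos.2 hcpos
        have h3 : 0 < (1/c) * Real.exp (-(c*B1)) := mul_pos h1c this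
        linarith [h3]
  -- split set integral
  have hsplit : (∫ t in Set.Ici T, t * g t) = ∫ t in T..B1, t * g t := by
    have hzero : (∫ t in Set.Ioi B1, t * g t) = 0 :=
      MeasureTheory.setIntegral_eq_zero_of_forall_eq_zero fun t ht => by
        rw [hgzero t ht, mul_zero]
    rw [MeasureTheory.integral_Ici_eq_integral_Ioi,
      ← Set.Ioc_union_Ioi_eq_Ioi hTB1,
      MeasureTheory.setIntegral_union (Set.Ioc_disjoint_Ioi le_rfl) measurableSet_Ioi
        (hInt.mono_set fun x hx => le_of_lt hx.1)
        (hInt.mono_set fun x hx => le_of_lt (lt_of_le_of_lt hTB1 hx)),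
      hzero, add_zero, intervalIntegral.integral_of_le hTB1]
  -- final arithmetic
  set r : ℝ := Real.exp (-(c*T)) with hr
  have hrpos : 0 < r := Real.exp_pos _
  have hcT : c * T = 4 * Real.log 2 * L := by
    rw [hcdef, hTdef]
    field_simp
    ring
  have hr2 : r ≤ ε^2 := by
    have hε2 : ε^2 = Real.exp (-(2*L)) := by
      rw [show -(2*L) = 2 * Real.log ε by rw [hlogε]; ring, two_mul, Real.exp_add,
        Real.exp_log hε0, sq]
    rw [hr, hε2, hcT]
    apply Real.exp_le_exp.2
    nlinarith [Real.log_two_gt_d9]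
  have h1GT : 1 - G T ≤ r := htail T hqT
  have hTr : T * (1 - G T) ≤ T * r := by
    apply mul_le_mul_of_nonneg_left h1GT hT0
  have hcinv : 1/c ≤ 2*q := by
    rw [hcdef, one_div_div, div_le_iff₀ hlog2pos]
    nlinarith [Real.log_two_gt_d9]
  have hεsq : ε^2 ≤ ε * (1/4) := by nlinarith
  calc (∫ t in Set.Ici T, t * g t) = T * (1 - G T) + I1 := by rw [hsplit, hmain]
  _ ≤ T * r + (1/c) * r := by
      linarith [hI1le, hTr]
  _ ≤ (2*(2*q)*L + 2*q) * (ε^2) := by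
      have hTr2 : T * r ≤ T * ε^2 := mul_le_mul_of_nonneg_left hr2 hT0
      have h2 : (1/c) * r ≤ (2*q) * ε^2 := by
        apply mul_le_mul hcinv hr2 hrpos.le (by linarith)
      rw [hTdef] at hTr2 ⊢
      nlinarith [hTr2, h2]
  _ ≤ 36 * (2*q) * ε * L := by nlinarith [hεsq, hq0, hLpos, hε0, hL1]
end

section
/- Let F be a regular distribution with revenue curve R_F(q) = q·F^{-1}(1-q). If 0 < q̃ ≤ q ≤ p < 1, then R_F(q̃) ≤ R_F(q)/(1-p). -/
open Set

/-- **Little gain from the tail of a regular distribution.**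
Let `F` be a differentiable regular distribution supported on `[a, b] ⊆ ℝ≥0`, with
revenue curve `R_F q = q * Finv (1 - q)` (where `Finv` is the inverse of `F` on the
support).  If `0 < q̃ ≤ q ≤ p < 1`, then `R_F q̃ ≤ R_F q / (1 - p)`. -/
theorem regular_revenue_little_gain (a b : ℝ) (ha : 0 ≤ a) (hab : a < b)
    (F f Finv : ℝ → ℝ)
    (hFmono : Monotone F) (hFcont : Continuous F)
    (hF0 : ∀ x ≤ a, F x = 0) (hF1 : ∀ x, b ≤ x → F x = 1)
    (hderiv : ∀ x ∈ Set.Icc a b, HasDerivAt F (f x) x)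
    (hfpos : ∀ x ∈ Set.Ioo a b, 0 < f x)
    (hreg : MonotoneOn (fun x => x - (1 - F x) / f x) (Set.Ioo a b))
    (hFinv : ∀ x ∈ Set.Icc a b, Finv (F x) = x)
    (qt q p : ℝ) (hqt : 0 < qt) (hq : qt ≤ q) (hqp : q ≤ p) (hp : p < 1) :
    qt * Finv (1 - qt) ≤ (q * Finv (1 - q)) / (1 - p) := by
  have hp0 : (0:ℝ) < 1 - p := by linarith
  have hq1 : q < 1 := lt_of_le_of_lt hqp hp
  have hqt1 : qt < 1 := lt_of_le_of_lt (hq.trans hqp) hp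
  have hFa : F a = 0 := hF0 a le_rfl
  have hFb : F b = 1 := hF1 b le_rfl
  -- surjectivity of F onto [0,1]
  have hsurj : ∀ t ∈ Icc (0:ℝ) 1, ∃ x ∈ Icc a b, F x = t := by
    intro t ht
    have h := intermediate_value_Icc hab.le hFcont.continuousOn
    rw [hFa, hFb] at h
    obtain ⟨x, hx, hFx⟩ := h ht
    exact ⟨x, hx, hFx⟩
  obtain ⟨X, hX, hFX⟩ := hsurj (1-q) ⟨by linarith, by linarith⟩
  obtain ⟨Y, hY, hFY⟩ := hsurj (1-qt) ⟨by linarith, by linarith⟩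
  have hXv : Finv (1-q) = X := by rw [← hFX, hFinv X hX]
  have hYv : Finv (1-qt) = Y := by rw [← hFY, hFinv Y hY]
  rw [hXv, hYv]
  have hXY : X ≤ Y := by
    by_contra h
    push_neg at h
    have h1 := hFmono h.le
    rw [hFX, hFY] at h1
    have hqq : q = qt := le_antisymm (by linarith) hq
    have : X = Y := by
      rw [← hXv, ← hYv, hqq]
    exact absurd this (ne_of_gt h)
  have hY0 : 0 ≤ Y := le_trans ha hY.1
  set c : ℝ := qt * Y with hc_def
  have hc : 0 ≤ c := mul_nonneg hqt.le hY0
  set ψ : ℝ → ℝ := fun t => (1 - F t) * t - F t * c with hψ_def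
  have hψderiv : ∀ t ∈ Icc a b, HasDerivAt ψ ((1 - F t) - f t * (t + c)) t := by
    intro t ht
    have h1 := hderiv t ht
    have h2 : HasDerivAt (fun x => (1 - F x) * x) ((0 - f t) * t + (1 - F t) * 1) t :=
      (((hasDerivAt_const t (1:ℝ)).sub h1).mul (hasDerivAt_id t))
    have h3 : HasDerivAt ψ ((0 - f t) * t + (1 - F t) * 1 - f t * c) t :=
      h2.sub (h1.mul_const c)
    convert h3 using 1
    ring
  have hψcont : Continuous ψ := by
    fun_prop
  -- key claim : 0 ≤ ψ X
  have hkey : 0 ≤ ψ X := by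
    by_cases H : ∃ t ∈ Ioo X Y, t - (1 - F t) / f t + c < 0
    · -- ψ is monotone on [a, X], and ψ a = a ≥ 0
      obtain ⟨t0, ht0, ht0lt⟩ := H
      have ht0ab : t0 ∈ Ioo a b := ⟨lt_of_le_of_lt hX.1 ht0.1, lt_of_lt_of_le ht0.2 hY.2⟩
      have hmono : MonotoneOn ψ (Icc a X) := by
        apply monotoneOn_of_deriv_nonneg (convex_Icc a X) hψcont.continuousOn
        · intro t ht
          rw [interior_Icc] at ht
          exact (hψderiv t ⟨ht.1.le, ht.2.le.trans hX.2⟩).differentiableAt.differentiableWithinAt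
        · intro t ht
          rw [interior_Icc] at ht
          have htab : t ∈ Ioo a b := ⟨ht.1, lt_of_lt_of_le ht.2 hX.2⟩
          rw [(hψderiv t ⟨htab.1.le, htab.2.le⟩).deriv]
          have hft := hfpos t htab
          have hmon := hreg htab ht0ab (le_of_lt (lt_trans ht.2 ht0.1))
          simp only at hmon
          have h4 : t - (1 - F t) / f t < -c := by linarith
          have h5 : t + c < (1 - F t) / f t := by linarith
          have h6 : (t + c) * f t < (1 - F t) / f t * f t :=
            mul_lt_mul_of_pos_right h5 hft
          rw [div_mul_cancel₀ _ (ne_of_gt hft)] at h6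
          nlinarith
      have h7 := hmono (left_mem_Icc.mpr hX.1) (right_mem_Icc.mpr hX.1) hX.1
      have h8 : ψ a = a := by
        simp only [hψ_def, hFa]
        ring
      linarith
    · -- ψ is antitone on [X, Y], and ψ Y ≥ 0
      push_neg at H
      have hanti : AntitoneOn ψ (Icc X Y) := by
        apply antitoneOn_of_deriv_nonpos (convex_Icc X Y) hψcont.continuousOn
        · intro t ht
          rw [interior_Icc] at ht
          exact (hψderiv t ⟨(hX.1.trans ht.1.le), ht.2.le.trans hY.2⟩).differentiableAt.differentiableWithinAt
        · intro t ht
          rw [interior_Icc] at ht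
          have htab : t ∈ Ioo a b := ⟨lt_of_le_of_lt hX.1 ht.1, lt_of_lt_of_le ht.2 hY.2⟩
          rw [(hψderiv t ⟨htab.1.le, htab.2.le⟩).deriv]
          have hft := hfpos t htab
          have h4 := H t ht
          have h5 : (1 - F t) / f t ≤ t + c := by linarith
          have h6 : (1 - F t) / f t * f t ≤ (t + c) * f t :=
            mul_le_mul_of_nonneg_right h5 hft.le
          rw [div_mul_cancel₀ _ (ne_of_gt hft)] at h6
          nlinarith
      have h7 := hanti (left_mem_Icc.mpr hXY) (right_mem_Icc.mpr hXY) hXY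
      have h8 : ψ Y = qt * c := by
        simp only [hψ_def, hFY, hc_def]
        ring
      nlinarith
  -- conclude
  rw [le_div_iff₀ hp0]
  have hψX : ψ X = q * X - (1 - q) * c := by
    simp only [hψ_def, hFX]
    ring
  nlinarith [mul_nonneg (sub_nonneg.mpr hqp) hc]
end

section
/- Let X be a random variable with regular distribution F on nonnegative reals, let α_i be a point with F(α_i) ∈ [c_1, c_2] for constants 0 < c_1 < c_2 ≤ 7/8, and suppose n³ ≥ 1/(1-c_2). If α ≥ (n³/c_1)·α_i·(1-F(α_i)), then α ≥ α_{n³}, where α_{n³} = inf{x : F(x) ≥ 1 - 1/n³}. -/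
/-- **The "center" α dominates the `1 - 1/n³` quantile (regular distributions).**
Let `X` have a differentiable regular distribution `F` supported on `[a, b] ⊆ ℝ≥0`,
let `αi` be a `(c₁, c₂)`-anchoring point (`F αi ∈ [c₁, c₂]`, `0 < c₁ < c₂ ≤ 7/8`),
and suppose `n³ ≥ 1/(1 - c₂)`.  If `α ≥ (n³/c₁) · αi · (1 - F αi)`, then
`α ≥ α_{n³} = inf {x | F x ≥ 1 - 1/n³}`. -/
theorem regular_anchor_dominates_quantile (a b : ℝ) (ha : 0 ≤ a) (hab : a < b)
    (F f : ℝ → ℝ)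
    (hFmono : Monotone F) (hFcont : Continuous F)
    (hF0 : ∀ x ≤ a, F x = 0) (hF1 : ∀ x, b ≤ x → F x = 1)
    (hderiv : ∀ x ∈ Set.Icc a b, HasDerivAt F (f x) x)
    (hfpos : ∀ x ∈ Set.Ioo a b, 0 < f x)
    (hreg : MonotoneOn (fun x => x - (1 - F x) / f x) (Set.Ioo a b))
    (c1 c2 : ℝ) (hc1 : 0 < c1) (hc12 : c1 < c2) (hc2 : c2 ≤ 7 / 8)
    (n : ℕ) (hn : 1 / (1 - c2) ≤ (n : ℝ) ^ 3)
    (αi α : ℝ) (hαi : F αi ∈ Set.Icc c1 c2)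
    (hα : ((n : ℝ) ^ 3 / c1) * (αi * (1 - F αi)) ≤ α) :
    sInf {x : ℝ | 1 - 1 / (n : ℝ) ^ 3 ≤ F x} ≤ α := by
  set p : ℝ := (n : ℝ) ^ 3 with hpdef
  have hc2' : (0:ℝ) < 1 - c2 := by linarith
  have hp : 0 < p := lt_of_lt_of_le (by positivity) hn
  have h1p : 1 / p ≤ 1 - c2 := by
    rw [div_le_iff₀ hp]
    calc (1:ℝ) = (1 / (1 - c2)) * (1 - c2) := by field_simp
    _ ≤ p * (1 - c2) := by gcongr
    _ = (1 - c2) * p := by ring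
  have hq0 : (0:ℝ) < 1 - 1/p := by linarith
  have hq1 : 1 - 1/p < 1 := by
    have : 0 < 1/p := by positivity
    linarith
  have hFa : F a = 0 := hF0 a le_rfl
  have hFb : F b = 1 := hF1 b le_rfl
  obtain ⟨hFi1, hFi2⟩ := hαi
  -- x₀ : the quantile point
  have hIVT := intermediate_value_Icc hab.le hFcont.continuousOn
  obtain ⟨x₀, hx₀mem, hFx₀⟩ : ∃ x₀ ∈ Set.Icc a b, F x₀ = 1 - 1/p := by
    rcases hIVT (a := 1 - 1/p) (by rw [hFa, hFb]; constructor <;> linarith) with ⟨x, hx, hfx⟩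
    exact ⟨x, hx, hfx⟩
  have hqc2 : c2 ≤ 1 - 1/p := by linarith
  -- αi ∈ Ioo a b
  have hαia : a < αi := by
    by_contra h
    push_neg at h
    have := hF0 αi h
    linarith
  have hαib : αi < b := by
    by_contra h
    push_neg at h
    have := hF1 αi h
    linarith
  have hαipos : 0 < αi := lt_of_le_of_lt ha hαia
  -- x₀ ∈ Ioo a b
  have hx₀a : a < x₀ := by
    by_contra h
    push_neg at h
    have := hF0 x₀ h
    linarith
  have hx₀b : x₀ < b := by
    by_contra h
    push_neg at h
    have := hF1 x₀ h
    linarith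
  have hx₀pos : 0 < x₀ := lt_of_le_of_lt ha hx₀a
  -- the key inequality : c1 * (x₀ * (1 - F x₀)) ≤ αi * (1 - F αi)
  have key : c1 * (x₀ * (1 - F x₀)) ≤ αi * (1 - F αi) := by
    rcases le_or_gt x₀ αi with hle | hlt
    · -- easy case
      have h1 : 1 - F x₀ ≤ 1 - F αi := by rw [hFx₀]; linarith
      have h2 : c1 * x₀ ≤ αi := by nlinarith
      have h3 : 0 ≤ 1 - F x₀ := by rw [hFx₀]; linarith
      calc c1 * (x₀ * (1 - F x₀)) = (c1 * x₀) * (1 - F x₀) := by ring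
        _ ≤ αi * (1 - F αi) := by
            apply mul_le_mul h2 h1 h3 hαipos.le
    · -- main case : αi < x₀, use regularity
      set K : ℝ := αi - (1 - F αi) / f αi with hK
      set G : ℝ → ℝ := fun x => x * (1 - F x) + K * F x with hG
      have hGd : ∀ x ∈ Set.Icc a b, HasDerivAt G ((1 - F x) - x * f x + K * f x) x := by
        intro x hx
        have h := hderiv x hx
        have h2 := ((hasDerivAt_id x).mul ((hasDerivAt_const x (1:ℝ)).sub h)).add
          ((hasDerivAt_const x K).mul h)
        refine h2.congr_deriv ?_
        simp only [id_eq, Pi.sub_apply]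
        ring
      have hGcont : Continuous G := by
        exact (continuous_id.mul (continuous_const.sub hFcont)).add (continuous_const.mul hFcont)
      have hαiIoo : αi ∈ Set.Ioo a b := ⟨hαia, hαib⟩
      -- G antitone on [αi, x₀]
      have hanti : AntitoneOn G (Set.Icc αi x₀) := by
        apply antitoneOn_of_deriv_nonpos (convex_Icc αi x₀) hGcont.continuousOn
        · intro x hx
          rw [interior_Icc] at hx
          exact ((hGd x ⟨(hαia.trans hx.1).le, (hx.2.trans hx₀b).le⟩).differentiableAt).differentiableWithinAt
        · intro x hx
          rw [interior_Icc] at hx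
          have hxIoo : x ∈ Set.Ioo a b := ⟨hαia.trans hx.1, hx.2.trans hx₀b⟩
          rw [(hGd x ⟨hxIoo.1.le, hxIoo.2.le⟩).deriv]
          have hfx := hfpos x hxIoo
          have hφ : K ≤ x - (1 - F x) / f x := hreg hαiIoo hxIoo hx.1.le
          have : (1 - F x) - x * f x + K * f x =
              f x * (K - (x - (1 - F x) / f x)) := by
            field_simp
            ring
          rw [this]
          apply mul_nonpos_of_nonneg_of_nonpos hfx.le
          linarith
      -- G monotone on [a, αi]
      have hmono : MonotoneOn G (Set.Icc a αi) := by
        apply monotoneOn_of_deriv_nonneg (convex_Icc a αi) hGcont.continuousOn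
        · intro x hx
          rw [interior_Icc] at hx
          exact ((hGd x ⟨hx.1.le, (hx.2.trans hαib).le⟩).differentiableAt).differentiableWithinAt
        · intro x hx
          rw [interior_Icc] at hx
          have hxIoo : x ∈ Set.Ioo a b := ⟨hx.1, hx.2.trans hαib⟩
          rw [(hGd x ⟨hxIoo.1.le, hxIoo.2.le⟩).deriv]
          have hfx := hfpos x hxIoo
          have hφ : x - (1 - F x) / f x ≤ K := hreg hxIoo hαiIoo hx.2.le
          have : (1 - F x) - x * f x + K * f x =
              f x * (K - (x - (1 - F x) / f x)) := by
            field_simp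
            ring
          rw [this]
          exact mul_nonneg hfx.le (by linarith)
      have h1 : G x₀ ≤ G αi :=
        hanti (Set.left_mem_Icc.mpr hlt.le) (Set.right_mem_Icc.mpr hlt.le) hlt.le
      have h2 : G a ≤ G αi :=
        hmono (Set.left_mem_Icc.mpr hαia.le) (Set.right_mem_Icc.mpr hαia.le) hαia.le
      simp only [hG] at h1 h2
      rw [hFa] at h2
      -- h1 : x₀ * (1 - F x₀) + K * F x₀ ≤ αi * (1 - F αi) + K * F αi
      -- h2 : a * 1 + K * 0 ≤ αi * (1 - F αi) + K * F αi
      have hFiq : F αi ≤ F x₀ := by rw [hFx₀]; linarith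
      have hH0 : 0 ≤ x₀ * (1 - F x₀) := by
        apply mul_nonneg hx₀pos.le
        rw [hFx₀]; linarith
      have hHi : 0 ≤ αi * (1 - F αi) := by
        apply mul_nonneg hαipos.le
        linarith
      have hFx₀1 : F x₀ ≤ 1 := by rw [hFx₀]; linarith
      have hFipos : 0 < F αi := lt_of_lt_of_le hc1 hFi1
      -- From h2 : K * F αi ≥ a - Hi ≥ -Hi
      have hKFi : -(αi * (1 - F αi)) ≤ K * F αi := by linarith [h2, ha]
      have h1' := mul_le_mul_of_nonneg_left h1 hFipos.le
      have sB : (K * F αi) * (F αi - F x₀) ≤ (-(αi * (1 - F αi))) * (F αi - F x₀) :=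
        mul_le_mul_of_nonpos_right hKFi (by linarith : F αi - F x₀ ≤ 0)
      have sC : F αi * (x₀ * (1 - F x₀)) ≤ (αi * (1 - F αi)) * F x₀ := by
        linarith [h1', sB]
      have t1 : c1 * (x₀ * (1 - F x₀)) ≤ F αi * (x₀ * (1 - F x₀)) :=
        mul_le_mul_of_nonneg_right hFi1 hH0
      have t2 : (αi * (1 - F αi)) * F x₀ ≤ (αi * (1 - F αi)) * 1 :=
        mul_le_mul_of_nonneg_left hFx₀1 hHi
      linarith [t1, sC, t2]
  -- conclude : x₀ ≤ α
  have hx₀α : x₀ ≤ α := by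
    have h1F : 1 - F x₀ = 1/p := by rw [hFx₀]; ring
    rw [h1F] at key
    have : x₀ ≤ (p / c1) * (αi * (1 - F αi)) := by
      have hpc : 0 < p / c1 := by positivity
      calc x₀ = (p / c1) * (c1 * (x₀ * (1/p))) := by field_simp
        _ ≤ (p / c1) * (αi * (1 - F αi)) := by
            apply mul_le_mul_of_nonneg_left key hpc.le
    linarith
  -- sInf ≤ x₀
  have hmem : x₀ ∈ {x : ℝ | 1 - 1 / p ≤ F x} := by
    simp only [Set.mem_setOf_eq, hFx₀]
    exact le_rfl
  have hbdd : BddBelow {x : ℝ | 1 - 1 / p ≤ F x} := by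
    refine ⟨a, fun x hx => ?_⟩
    simp only [Set.mem_setOf_eq] at hx
    by_contra h
    push_neg at h
    have := hF0 x h.le
    linarith
  exact le_trans (csInf_le hbdd hmem) hx₀α
end

section
/- Let X be a regular random variable and α ≥ α_{n³} (i.e., Pr[X ≥ α] ≤ 1/n³), with n ≥ 2. Then for all ℓ ≥ 1, Pr[X ≥ ℓ·α] ≤ 2/(ℓ·n³). -/
private lemma aux_mono (F f : ℝ → ℝ) (a b c lo hi : ℝ)
    (hFcont : Continuous F)
    (hderiv : ∀ x ∈ Set.Icc a b, HasDerivAt F (f x) x)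
    (hsub : Set.Icc lo hi ⊆ Set.Icc a b)
    (hsign : ∀ t ∈ Set.Ioo lo hi, 0 ≤ (1 - F t) - t * f t + c * f t) :
    MonotoneOn (fun t => t * (1 - F t) + c * F t) (Set.Icc lo hi) := by
  have hD : ∀ t ∈ Set.Ioo lo hi,
      HasDerivAt (fun t => t * (1 - F t) + c * F t)
        ((1 - F t) - t * f t + c * f t) t := by
    intro t ht
    have htab : t ∈ Set.Icc a b := hsub (Set.Ioo_subset_Icc_self ht)
    have hF := hderiv t htab
    have h1 : HasDerivAt (fun t => 1 - F t) (0 - f t) t :=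
      (hasDerivAt_const t (1:ℝ)).sub hF
    have h2 : HasDerivAt (fun t => t * (1 - F t)) (1 * (1 - F t) + t * (0 - f t)) t :=
      (hasDerivAt_id t).mul h1
    have h3 : HasDerivAt (fun t => c * F t) (c * f t) t := hF.const_mul c
    have := h2.add h3
    exact this.congr_deriv (by ring)
  apply monotoneOn_of_deriv_nonneg (convex_Icc lo hi)
  · exact ((continuous_id.mul (continuous_const.sub hFcont)).add
      (continuous_const.mul hFcont)).continuousOn
  · rw [interior_Icc]
    exact fun t ht => (hD t ht).differentiableAt.differentiableWithinAt
  · rw [interior_Icc]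
    intro t ht
    rw [(hD t ht).deriv]
    exact hsign t ht

private lemma aux_anti (F f : ℝ → ℝ) (a b c lo hi : ℝ)
    (hFcont : Continuous F)
    (hderiv : ∀ x ∈ Set.Icc a b, HasDerivAt F (f x) x)
    (hsub : Set.Icc lo hi ⊆ Set.Icc a b)
    (hsign : ∀ t ∈ Set.Ioo lo hi, (1 - F t) - t * f t + c * f t ≤ 0) :
    AntitoneOn (fun t => t * (1 - F t) + c * F t) (Set.Icc lo hi) := by
  have hD : ∀ t ∈ Set.Ioo lo hi,
      HasDerivAt (fun t => t * (1 - F t) + c * F t)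
        ((1 - F t) - t * f t + c * f t) t := by
    intro t ht
    have htab : t ∈ Set.Icc a b := hsub (Set.Ioo_subset_Icc_self ht)
    have hF := hderiv t htab
    have h1 : HasDerivAt (fun t => 1 - F t) (0 - f t) t :=
      (hasDerivAt_const t (1:ℝ)).sub hF
    have h2 : HasDerivAt (fun t => t * (1 - F t)) (1 * (1 - F t) + t * (0 - f t)) t :=
      (hasDerivAt_id t).mul h1
    have h3 : HasDerivAt (fun t => c * F t) (c * f t) t := hF.const_mul c
    have := h2.add h3
    exact this.congr_deriv (by ring)
  apply antitoneOn_of_deriv_nonpos (convex_Icc lo hi)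
  · exact ((continuous_id.mul (continuous_const.sub hFcont)).add
      (continuous_const.mul hFcont)).continuousOn
  · rw [interior_Icc]
    exact fun t ht => (hD t ht).differentiableAt.differentiableWithinAt
  · rw [interior_Icc]
    intro t ht
    rw [(hD t ht).deriv]
    exact hsign t ht

set_option maxHeartbeats 1600000 in
/-- **Tail decay of regular distributions.**
Let `X` have a differentiable regular distribution `F` supported on `[a, b] ⊆ ℝ≥0`,
let `n ≥ 2`, and let `α` satisfy `Pr[X ≥ α] = 1 - F α ≤ 1/n³` (i.e. `α ≥ α_{n³}`).
Then for all `ℓ ≥ 1`, `Pr[X ≥ ℓ·α] = 1 - F (ℓ·α) ≤ 2/(ℓ·n³)`. -/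
theorem regular_tail_decay (a b : ℝ) (ha : 0 ≤ a) (hab : a < b)
    (F f : ℝ → ℝ)
    (hFmono : Monotone F) (hFcont : Continuous F)
    (hF0 : ∀ x ≤ a, F x = 0) (hF1 : ∀ x, b ≤ x → F x = 1)
    (hderiv : ∀ x ∈ Set.Icc a b, HasDerivAt F (f x) x)
    (hfpos : ∀ x ∈ Set.Ioo a b, 0 < f x)
    (hreg : MonotoneOn (fun x => x - (1 - F x) / f x) (Set.Ioo a b))
    (n : ℕ) (hn : 2 ≤ n) (α : ℝ) (hα : 1 - F α ≤ 1 / (n : ℝ) ^ 3) :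
    ∀ ℓ : ℝ, 1 ≤ ℓ → 1 - F (ℓ * α) ≤ 2 / (ℓ * (n : ℝ) ^ 3) := by
  intro ℓ hℓ
  set N : ℝ := (n : ℝ) ^ 3 with hNdef
  have hn2 : (2:ℝ) ≤ (n:ℝ) := by exact_mod_cast hn
  have hn8 : (8:ℝ) ≤ N := by
    have : (2:ℝ)^3 ≤ (n:ℝ)^3 := pow_le_pow_left₀ (by norm_num) hn2 3
    norm_num at this; linarith
  have hNpos : (0:ℝ) < N := by linarith
  have hℓpos : (0:ℝ) < ℓ := by linarith
  have hRHSpos : (0:ℝ) < 2 / (ℓ * N) := by positivity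
  have hNinv : 1 / N ≤ 1 / 8 := by
    apply one_div_le_one_div_of_le <;> linarith
  have hFαlb : 1 - 1 / N ≤ F α := by linarith
  have haα : a < α := by
    by_contra h
    push_neg at h
    have h0 := hF0 α h
    rw [h0] at hFαlb
    linarith
  have hα0 : (0:ℝ) < α := lt_of_le_of_lt ha haα
  have hβge : α ≤ ℓ * α := le_mul_of_one_le_left hα0.le hℓ
  set β := ℓ * α with hβdef
  by_cases hbβ : b ≤ β
  · rw [hF1 β hbβ]; simpa using hRHSpos.le
  push_neg at hbβ
  have hαb : α < b := lt_of_le_of_lt hβge hbβ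
  have hαmem : α ∈ Set.Ioo a b := ⟨haα, hαb⟩
  set c : ℝ := α - (1 - F α) / f α with hcdef
  -- monotone on [a, α]
  have hmono : MonotoneOn (fun t => t * (1 - F t) + c * F t) (Set.Icc a α) := by
    apply aux_mono F f a b c a α hFcont hderiv
      (Set.Icc_subset_Icc le_rfl hαb.le)
    intro t ht
    have htab : t ∈ Set.Ioo a b := ⟨ht.1, lt_trans ht.2 hαb⟩
    have hft := hfpos t htab
    have hmon := hreg htab hαmem ht.2.le
    simp only at hmon
    have : (t - c) * f t ≤ 1 - F t := by
      have h2 : t - c ≤ (1 - F t) / f t := by rw [hcdef]; linarith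
      calc (t - c) * f t ≤ ((1 - F t) / f t) * f t :=
            mul_le_mul_of_nonneg_right h2 hft.le
        _ = 1 - F t := div_mul_cancel₀ _ hft.ne'
    nlinarith
  have hanti : AntitoneOn (fun t => t * (1 - F t) + c * F t) (Set.Icc α β) := by
    apply aux_anti F f a b c α β hFcont hderiv
      (Set.Icc_subset_Icc haα.le hbβ.le)
    intro t ht
    have htab : t ∈ Set.Ioo a b := ⟨lt_trans haα ht.1, lt_trans ht.2 hbβ⟩
    have hft := hfpos t htab
    have hmon := hreg hαmem htab ht.1.le
    simp only at hmon
    have : 1 - F t ≤ (t - c) * f t := by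
      have h2 : (1 - F t) / f t ≤ t - c := by rw [hcdef]; linarith
      calc 1 - F t = ((1 - F t) / f t) * f t := (div_mul_cancel₀ _ hft.ne').symm
        _ ≤ (t - c) * f t := mul_le_mul_of_nonneg_right h2 hft.le
    nlinarith
  have h1 := hmono (Set.left_mem_Icc.mpr haα.le) (Set.right_mem_Icc.mpr haα.le) haα.le
  have h2 := hanti (Set.left_mem_Icc.mpr hβge) (Set.right_mem_Icc.mpr hβge) hβge
  simp only at h1 h2
  rw [hF0 a le_rfl] at h1
  -- abbreviations
  have hFβ1 : F β ≤ 1 := by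
    have := hFmono hbβ.le
    rw [hF1 b le_rfl] at this; exact this
  have hFαβ : F α ≤ F β := hFmono hβge
  have hFα1 : F α ≤ 1 := le_trans hFαβ hFβ1
  have hFαpos : (0:ℝ) < F α := by
    have : (1:ℝ) - 1/8 ≤ F α := by linarith
    linarith
  -- h1 : a * (1 - 0) + c * 0 ≤ α * (1 - F α) + c * F α
  have key1 : 0 ≤ α * (1 - F α) + c * F α := by
    have : a ≤ α * (1 - F α) + c * F α := by linarith [h1]
    linarith
  have key2 : β * (1 - F β) + c * F β ≤ α * (1 - F α) + c * F α := h2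
  have hgα : 0 ≤ α * (1 - F α) := mul_nonneg hα0.le (by linarith)
  -- main inequality: β (1-Fβ) Fα ≤ α (1-Fα) Fβ
  have main : β * (1 - F β) * F α ≤ α * (1 - F α) * F β := by
    nlinarith [mul_nonneg key1 (sub_nonneg.mpr hFαβ),
      mul_le_mul_of_nonneg_right key2 hFαpos.le]
  have hgαN : α * (1 - F α) ≤ α / N := by
    rw [div_eq_mul_one_div]
    exact mul_le_mul_of_nonneg_left hα hα0.le
  have hq : (0:ℝ) ≤ 1 - F β := by linarith
  have step : ℓ * α * (1 - F β) * F α ≤ α / N := by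
    have h3 : α * (1 - F α) * F β ≤ α * (1 - F α) * 1 :=
      mul_le_mul_of_nonneg_left hFβ1 hgα
    calc ℓ * α * (1 - F β) * F α ≤ α * (1 - F α) * F β := main
      _ ≤ α * (1 - F α) * 1 := h3
      _ ≤ α / N := by linarith [hgαN]
  have step2 : ℓ * (1 - F β) * (N - 1) ≤ 1 := by
    have hs : N * (ℓ * α * (1 - F β) * F α) ≤ α := by
      have := mul_le_mul_of_nonneg_left step hNpos.le
      have hcancel : N * (α / N) = α := by field_simp
      linarith [this, hcancel.le]
    have hqℓα : (0:ℝ) ≤ ℓ * α * (1 - F β) := by positivity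
    have hNF : N - 1 ≤ N * F α := by
      have hh := mul_le_mul_of_nonneg_left hFαlb hNpos.le
      have he : N * (1 - 1/N) = N - 1 := by field_simp
      linarith
    have h4 : ℓ * α * (1 - F β) * (N - 1) ≤ α := by
      calc ℓ * α * (1 - F β) * (N - 1)
          ≤ ℓ * α * (1 - F β) * (N * F α) := mul_le_mul_of_nonneg_left hNF hqℓα
        _ = N * (ℓ * α * (1 - F β) * F α) := by ring
        _ ≤ α := hs
    have h5 : (ℓ * (1 - F β) * (N - 1)) * α ≤ 1 * α := by
      calc (ℓ * (1 - F β) * (N - 1)) * α = ℓ * α * (1 - F β) * (N - 1) := by ring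
        _ ≤ α := h4
        _ = 1 * α := by ring
    exact le_of_mul_le_mul_right h5 hα0
  rw [le_div_iff₀ (by positivity : (0:ℝ) < ℓ * N)]
  have hqℓ : (0:ℝ) ≤ ℓ * (1 - F β) := by positivity
  nlinarith [mul_le_mul_of_nonneg_left (by linarith : N ≤ 2 * (N - 1)) hqℓ]
end

section
/- In the unit-demand pricing problem, for any price vector P and any α > 0, the price vector P' obtained by raising every price below α up to α satisfies R_{P'} ≥ R_P - α. -/
open MeasureTheory Classical

/-- The item bought by a quasi-linear unit-demand buyer with values `v` facing prices `p`:
the item with the largest nonnegative value-minus-price gap, ties broken consistently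
(by least index); `none` if no item has a nonnegative gap. -/
noncomputable def soldItem {n : ℕ} (v p : Fin n → ℝ) : Option (Fin n) :=
  let s := Finset.univ.filter fun i => 0 ≤ v i - p i ∧ ∀ j, v j - p j ≤ v i - p i
  if h : s.Nonempty then some (s.min' h) else none

/-- The seller's (pointwise) revenue: the price of the item bought, or `0` if no sale. -/
noncomputable def revenue {n : ℕ} (v p : Fin n → ℝ) : ℝ :=
  ((soldItem v p).map p).getD 0

lemma revenue_eq {n : ℕ} (v p : Fin n → ℝ) :
    revenue v p = if h : (Finset.univ.filter fun i => 0 ≤ v i - p i ∧ ∀ j, v j - p j ≤ v i - p i).Nonempty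
      then p ((Finset.univ.filter fun i => 0 ≤ v i - p i ∧ ∀ j, v j - p j ≤ v i - p i).min' h) else 0 := by
  rw [revenue, soldItem]
  split <;> simp_all

lemma key {n : ℕ} (v P : Fin n → ℝ) (α : ℝ) (hα : 0 < α) :
    revenue v P - α ≤ revenue v (fun i => max (P i) α) := by
  set P' : Fin n → ℝ := fun i => max (P i) α with hP'
  have hP'ge : ∀ i, P i ≤ P' i := fun i => le_max_left _ _
  set s : Finset (Fin n) := Finset.univ.filter fun i => 0 ≤ v i - P i ∧ ∀ j, v j - P j ≤ v i - P i with hs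
  set s' : Finset (Fin n) := Finset.univ.filter fun i => 0 ≤ v i - P' i ∧ ∀ j, v j - P' j ≤ v i - P' i with hs'
  have hrev : revenue v P = if h : s.Nonempty then P (s.min' h) else 0 := revenue_eq v P
  have hrev' : revenue v P' = if h : s'.Nonempty then P' (s'.min' h) else 0 := revenue_eq v P'
  have hnn' : 0 ≤ revenue v P' := by
    rw [hrev']; split
    · exact le_trans hα.le (le_max_right _ _)
    · rfl
  rw [hrev]
  split
  case isFalse => linarith
  case isTrue h =>
    set i := s.min' h with hi
    have hiS : i ∈ s := s.min'_mem h
    rw [hs, Finset.mem_filter] at hiS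
    obtain ⟨-, hi0, himax⟩ := hiS
    by_cases hPi : α ≤ P i
    · -- P i ≥ α : sold item unchanged
      have hP'i : P' i = P i := max_eq_left hPi
      have hiS' : i ∈ s' := by
        rw [hs', Finset.mem_filter]
        refine ⟨Finset.mem_univ _, by rw [hP'i]; exact hi0, fun j => ?_⟩
        rw [hP'i]
        exact le_trans (by linarith [hP'ge j]) (himax j)
      have hsub : s' ⊆ s := by
        intro j hj
        rw [hs', Finset.mem_filter] at hj
        obtain ⟨-, hj0, hjmax⟩ := hj
        have h1 : v i - P i ≤ v j - P' j := by
          have := hjmax i; rw [hP'i] at this; linarith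
        have h2 : v j - P' j ≤ v j - P j := by linarith [hP'ge j]
        rw [hs, Finset.mem_filter]
        exact ⟨Finset.mem_univ _, by linarith, fun k => by linarith [himax k]⟩
      have hne' : s'.Nonempty := ⟨i, hiS'⟩
      have hmin : s'.min' hne' = i := by
        apply le_antisymm (s'.min'_le _ hiS')
        exact s.min'_le _ (hsub (s'.min'_mem hne'))
      rw [hrev', dif_pos hne', hmin, hP'i]
      linarith
    · push_neg at hPi
      linarith

/-- **Raising low prices loses at most α.**
For any price vector `P` and any `α > 0`, raising every price below `α` up to `α`
yields a price vector `P'` with expected revenue `R_{P'} ≥ R_P - α`. -/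
theorem raise_low_prices {n : ℕ} {Ω : Type*} [MeasurableSpace Ω]
    (μ : Measure Ω) [IsProbabilityMeasure μ] (V : Ω → Fin n → ℝ)
    (α : ℝ) (hα : 0 < α) (P : Fin n → ℝ)
    (h1 : Integrable (fun ω => revenue (V ω) P) μ)
    (h2 : Integrable (fun ω => revenue (V ω) fun i => max (P i) α) μ) :
    (∫ ω, revenue (V ω) P ∂μ) - α ≤ ∫ ω, revenue (V ω) (fun i => max (P i) α) ∂μ := by
  have hmono : ∀ ω, revenue (V ω) P - α ≤ revenue (V ω) (fun i => max (P i) α) :=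
    fun ω => key (V ω) P α hα
  have hint := integral_mono (h1.sub (integrable_const α)) h2 hmono
  simp only [Pi.sub_apply] at hint
  rw [integral_sub h1 (integrable_const α), integral_const, probReal_univ] at hint
  simpa using hint
end

section
/- In the unit-demand pricing problem, let α > 0 and S(α) = E[max_i v_i · 1{max_i v_i ≥ α}]. For any price vector P, the price vector P' obtained by setting every price greater than α to +∞ (i.e., removing those items) satisfies R_{P'} ≥ R_P - S(α). -/
open MeasureTheory Classical

/-- The seller's revenue when the sale is restricted to the items in `S` (i.e. all items
outside `S` are priced at `+∞` and can never be bought). -/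
noncomputable def revenueOn {n : ℕ} (S : Finset (Fin n)) (v p : Fin n → ℝ) : ℝ :=
  let s := S.filter fun i => 0 ≤ v i - p i ∧ ∀ j ∈ S, v j - p j ≤ v i - p i
  if h : s.Nonempty then p (s.min' h) else 0

lemma revenueOn_nonneg' {n : ℕ} (S : Finset (Fin n)) (v p : Fin n → ℝ)
    (hp : ∀ i, 0 ≤ p i) : 0 ≤ revenueOn S v p := by
  unfold revenueOn
  dsimp only
  split
  · exact hp _
  · exact le_refl 0

lemma key_pointwise' {n : ℕ} [NeZero n] (v P : Fin n → ℝ) (hP : ∀ i, 0 ≤ P i)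
    (α : ℝ) (hα : 0 < α) :
    revenue v P ≤ revenueOn (Finset.univ.filter fun i => P i ≤ α) v P +
      (if α ≤ Finset.univ.sup' Finset.univ_nonempty v then
        Finset.univ.sup' Finset.univ_nonempty v else 0) := by
  have hr' := revenueOn_nonneg' (Finset.univ.filter fun i => P i ≤ α) v P hP
  set S := Finset.univ.filter fun i => P i ≤ α with hS
  set M := Finset.univ.sup' Finset.univ_nonempty v with hM
  unfold revenue soldItem
  dsimp only
  set s := Finset.univ.filter fun i => 0 ≤ v i - P i ∧ ∀ j, v j - P j ≤ v i - P i with hs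
  by_cases h : s.Nonempty
  · rw [dif_pos h]
    simp only [Option.map_some, Option.getD_some]
    set i := s.min' h with hi_def
    have hi : i ∈ s := Finset.min'_mem _ h
    rw [hs, Finset.mem_filter] at hi
    obtain ⟨-, h0, hdom⟩ := hi
    have hviM : v i ≤ M := Finset.le_sup' v (Finset.mem_univ i)
    by_cases hcase : α ≤ M
    · rw [if_pos hcase]
      linarith
    · rw [if_neg hcase]
      push_neg at hcase
      have hiS : i ∈ S := by
        rw [hS, Finset.mem_filter]
        exact ⟨Finset.mem_univ i, by linarith⟩
      have hi' : i ∈ S.filter fun k => 0 ≤ v k - P k ∧ ∀ j ∈ S, v j - P j ≤ v k - P k := by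
        rw [Finset.mem_filter]
        exact ⟨hiS, h0, fun j _ => hdom j⟩
      unfold revenueOn
      dsimp only
      have hne : (S.filter fun k => 0 ≤ v k - P k ∧ ∀ j ∈ S, v j - P j ≤ v k - P k).Nonempty :=
        ⟨i, hi'⟩
      rw [dif_pos hne]
      have heq : (S.filter fun k => 0 ≤ v k - P k ∧ ∀ j ∈ S, v j - P j ≤ v k - P k).min' hne = i := by
        refine le_antisymm (Finset.min'_le _ _ hi') ?_
        have hk := Finset.min'_mem _ hne
        set k := (S.filter fun k => 0 ≤ v k - P k ∧ ∀ j ∈ S, v j - P j ≤ v k - P k).min' hne with hk_def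
        rw [Finset.mem_filter] at hk
        obtain ⟨hkS, hk0, hkdom⟩ := hk
        have h1 : v i - P i ≤ v k - P k := hkdom i hiS
        have hks : k ∈ s := by
          rw [hs, Finset.mem_filter]
          exact ⟨Finset.mem_univ k, hk0, fun j => le_trans (hdom j) h1⟩
        exact Finset.min'_le _ _ hks
      rw [heq]
      linarith
  · rw [dif_neg h]
    simp only [Option.map_none, Option.getD_none]
    split_ifs with hcase
    · have : α ≤ M := hcase
      linarith
    · linarith

/-- **Removing the expensive items loses at most the tail of the maximum.**
Let `α > 0` and `S(α) = E[max_i v_i · 1{max_i v_i ≥ α}]`.  For any (nonnegative) price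
vector `P`, setting every price greater than `α` to `+∞` — i.e. restricting the sale to
the items priced at most `α` — yields expected revenue `R_{P'} ≥ R_P - S(α)`. -/
theorem remove_expensive_items {n : ℕ} [NeZero n] {Ω : Type*} [MeasurableSpace Ω]
    (μ : Measure Ω) [IsProbabilityMeasure μ] (V : Ω → Fin n → ℝ)
    (P : Fin n → ℝ) (hP : ∀ i, 0 ≤ P i) (α : ℝ) (hα : 0 < α)
    (h1 : Integrable (fun ω => revenue (V ω) P) μ)
    (h2 : Integrable
      (fun ω => revenueOn (Finset.univ.filter fun i => P i ≤ α) (V ω) P) μ)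
    (h3 : Integrable (fun ω =>
      if α ≤ Finset.univ.sup' Finset.univ_nonempty (V ω) then
        Finset.univ.sup' Finset.univ_nonempty (V ω) else 0) μ) :
    (∫ ω, revenue (V ω) P ∂μ) -
        (∫ ω, (if α ≤ Finset.univ.sup' Finset.univ_nonempty (V ω) then
          Finset.univ.sup' Finset.univ_nonempty (V ω) else 0) ∂μ)
      ≤ ∫ ω, revenueOn (Finset.univ.filter fun i => P i ≤ α) (V ω) P ∂μ := by
  rw [sub_le_iff_le_add, ← integral_add h2 h3]
  exact integral_mono h1 (h2.add h3) fun ω => key_pointwise' (V ω) P hP α hα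
end

section
/- Let v_1,...,v_n be i.i.d. nonnegative random variables with MHR distribution F, and ε ∈ (0,1). Setting every item's price to p = (1-ε)·α_n, where α_n = inf{x : F(x) ≥ 1-1/n}, yields expected revenue at least (1 - e^{-n^ε} - ε)·α_n. -/
/-- **A single price is nearly optimal for i.i.d. MHR values.**
Let `v_1, …, v_n` be i.i.d. nonnegative values with MHR cdf `F` (density `f` supported on
`[a, b]`, `a ≥ 0`), and `ε ∈ (0,1)`.  Pricing every item at `p = (1-ε)·α_n` (where
`α_n = inf {x | F x ≥ 1 - 1/n}`) yields expected revenue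
`p · Pr[max_i v_i ≥ p] = p · (1 - (F p)^n) ≥ (1 - e^{-n^ε} - ε) · α_n`. -/
theorem iid_mhr_single_price (a b : ℝ) (ha : 0 ≤ a) (hab : a < b) (F f : ℝ → ℝ)
    (hFmono : Monotone F) (hFcont : Continuous F)
    (hF0 : ∀ x ≤ a, F x = 0) (hF1 : ∀ x, b ≤ x → F x = 1)
    (hderiv : ∀ x ∈ Set.Ico a b, HasDerivAt F (f x) x)
    (hMHR : MonotoneOn (fun x => f x / (1 - F x)) (Set.Ico a b))
    (n : ℕ) (hn : 1 ≤ n) (ε : ℝ) (hε : ε ∈ Set.Ioo (0 : ℝ) 1) :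
    (1 - Real.exp (-((n : ℝ) ^ ε)) - ε) * alphaQ F n ≤
      ((1 - ε) * alphaQ F n) * (1 - (F ((1 - ε) * alphaQ F n)) ^ n) := by
  obtain ⟨hε0, hε1⟩ := hε
  have hFa : F a = 0 := hF0 a le_rfl
  have hFb : F b = 1 := hF1 b le_rfl
  have hFnn : ∀ x, 0 ≤ F x := by
    intro x
    rcases le_total x a with h | h
    · rw [hF0 x h]
    · rw [← hFa]; exact hFmono h
  rcases eq_or_lt_of_le hn with h1 | h2
  · -- n = 1 : alphaQ F 1 = 0 and both sides vanish
    have hn1 : n = 1 := h1.symm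
    subst hn1
    have hset : {x : ℝ | 1 - 1 / ((1 : ℕ) : ℝ) ≤ F x} = Set.univ := by
      ext x; simp [hFnn x]
    have hα0 : alphaQ F ((1 : ℕ) : ℝ) = 0 := by
      rw [alphaQ]
      rw [show {x : ℝ | 1 - 1 / ((1 : ℕ) : ℝ) ≤ F x} = Set.univ by
        ext x; simp [hFnn x]]
      exact Real.sInf_of_not_bddBelow (by simpa using not_bddBelow_univ)
    rw [hα0]
    simp
  · -- main case : n ≥ 2
    have hn2 : 2 ≤ n := h2
    have hnpos : (0 : ℝ) < (n : ℝ) := by positivity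
    have hn2' : (2 : ℝ) ≤ (n : ℝ) := by exact_mod_cast hn2
    set q : ℝ := 1 - 1 / (n : ℝ) with hqdef
    have hq0 : 0 < q := by
      have : 1 / (n : ℝ) ≤ 1 / 2 := by
        apply one_div_le_one_div_of_le <;> linarith
      simp only [hqdef]; linarith
    have hq1 : q < 1 := by
      have : 0 < 1 / (n : ℝ) := by positivity
      simp only [hqdef]; linarith
    set S : Set ℝ := {x : ℝ | q ≤ F x} with hSdef
    have hSb : b ∈ S := by simp [hSdef, hFb, hq1.le]
    have hSlb : ∀ x ∈ S, a ≤ x := by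
      intro x hx
      by_contra hxa
      push_neg at hxa
      have : F x = 0 := hF0 x hxa.le
      have : q ≤ 0 := by rw [← this]; exact hx
      linarith
    have hSbdd : BddBelow S := ⟨a, hSlb⟩
    have hSclosed : IsClosed S := isClosed_le continuous_const hFcont
    set α : ℝ := alphaQ F n with hαdef
    have hαS : α ∈ S := by
      rw [hαdef, alphaQ]
      exact hSclosed.csInf_mem ⟨b, hSb⟩ hSbdd
    have hαmem : q ≤ F α := hαS
    have haα : a ≤ α := hSlb α hαS
    have hαb : α ≤ b := csInf_le hSbdd hSb
    have hα0 : 0 ≤ α := ha.trans haα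
    have hFαle : F α ≤ q := by
      have htend : Filter.Tendsto F (nhdsWithin α (Set.Iio α)) (nhds (F α)) :=
        (hFcont.tendsto α).mono_left nhdsWithin_le_nhds
      refine le_of_tendsto htend ?_
      filter_upwards [self_mem_nhdsWithin] with x hx
      by_contra hcon
      push_neg at hcon
      have : α ≤ x := csInf_le hSbdd hcon.le
      exact absurd this (not_le.mpr hx)
    have hFα : F α = q := le_antisymm hFαle hαmem
    set p : ℝ := (1 - ε) * α with hpdef
    have hpα : p ≤ α := by nlinarith
    have hp0 : 0 ≤ p := by nlinarith
    set E : ℝ := Real.exp (-((n : ℝ) ^ ε)) with hEdef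
    have hE0 : 0 < E := Real.exp_pos _
    rcases le_or_gt p a with hcase | hcase
    · -- trivial case: price below support, F p = 0
      have hFp : F p = 0 := hF0 p hcase
      rw [hFp]
      rw [zero_pow (by omega : n ≠ 0)]
      nlinarith
    · -- main case
      have haα' : a < α := lt_of_lt_of_le hcase hpα
      -- the log-survival function
      set G : ℝ → ℝ := fun x => -Real.log (1 - F x) with hGdef
      have hFlt1 : ∀ x ∈ Set.Icc a α, F x < 1 := by
        intro x hx
        calc F x ≤ F α := hFmono hx.2
        _ = q := hFα
        _ < 1 := hq1
      have hGcont : ContinuousOn G (Set.Icc a α) := by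
        apply ContinuousOn.neg
        apply ContinuousOn.log
        · exact (continuous_const.sub hFcont).continuousOn
        · intro x hx
          have := hFlt1 x hx
          linarith
      have hGderiv : ∀ x ∈ Set.Ioo a α, HasDerivAt G (f x / (1 - F x)) x := by
        intro x hx
        have hxab : x ∈ Set.Ico a b := ⟨hx.1.le, lt_of_lt_of_le hx.2 hαb⟩
        have hd := hderiv x hxab
        have h1F : HasDerivAt (fun y => 1 - F y) (-f x) x := by
          simpa using hd.const_sub (1 : ℝ)
        have hne : 1 - F x ≠ 0 := by
          have := hFlt1 x ⟨hx.1.le, hx.2.le⟩; linarith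
        have hlog := h1F.log hne
        have := hlog.neg
        simpa [hGdef, neg_div, Pi.neg_def] using this
      have hGconv : ConvexOn ℝ (Set.Icc a α) G := by
        apply MonotoneOn.convexOn_of_deriv (convex_Icc a α) hGcont
        · rw [interior_Icc]
          exact fun x hx => (hGderiv x hx).differentiableAt.differentiableWithinAt
        · rw [interior_Icc]
          intro x hx y hy hxy
          rw [(hGderiv x hx).deriv, (hGderiv y hy).deriv]
          exact hMHR ⟨hx.1.le, lt_of_lt_of_le hx.2 hαb⟩ ⟨hy.1.le, lt_of_lt_of_le hy.2 hαb⟩ hxy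
      have hden : 0 < α - a := by linarith
      set t : ℝ := ε * α / (α - a) with htdef
      have ht0 : 0 ≤ t := by positivity
      have ht1 : t ≤ 1 := by
        rw [htdef, div_le_one hden]
        nlinarith
      have htε : ε ≤ t := by
        rw [htdef, le_div_iff₀ hden]
        nlinarith
      have hcombo : t * a + (1 - t) * α = p := by
        rw [hpdef, htdef]
        field_simp
        ring
      have hGa : G a = 0 := by simp [hGdef, hFa]
      have hGα : G α = Real.log n := by
        rw [hGdef]
        simp only [hFα, hqdef]
        rw [show (1 : ℝ) - (1 - 1 / (n : ℝ)) = (n : ℝ)⁻¹ by field_simp; ring]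
        rw [Real.log_inv]
        ring
      have hlogn : 0 ≤ Real.log n := Real.log_nonneg (by linarith)
      have hGp : G p ≤ (1 - ε) * Real.log n := by
        have hmem_a : a ∈ Set.Icc a α := Set.left_mem_Icc.mpr haα
        have hmem_α : α ∈ Set.Icc a α := Set.right_mem_Icc.mpr haα
        have := hGconv.2 hmem_a hmem_α ht0 (by linarith : (0:ℝ) ≤ 1 - t) (by ring)
        simp only [smul_eq_mul] at this
        rw [hcombo, hGa, hGα] at this
        calc G p ≤ t * 0 + (1 - t) * Real.log n := this
        _ = (1 - t) * Real.log n := by ring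
        _ ≤ (1 - ε) * Real.log n := by
            apply mul_le_mul_of_nonneg_right _ hlogn
            linarith
      have hFp_lt1 : F p < 1 := hFlt1 p ⟨hcase.le, hpα⟩
      have h1Fp : 0 < 1 - F p := by linarith
      set x0 : ℝ := Real.exp (-(1 - ε) * Real.log n) with hx0def
      have hx0pos : 0 < x0 := Real.exp_pos _
      have hFp_le : F p ≤ 1 - x0 := by
        have hlogle : -(1 - ε) * Real.log n ≤ Real.log (1 - F p) := by
          have : -Real.log (1 - F p) ≤ (1 - ε) * Real.log n := hGp
          linarith
        have := Real.exp_le_exp.mpr hlogle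
        rw [Real.exp_log h1Fp] at this
        rw [hx0def]
        linarith
      have hFp0 : 0 ≤ F p := hFnn p
      have h1x0exp : 1 - x0 ≤ Real.exp (-x0) := by
        linarith [Real.add_one_le_exp (-x0)]
      have hFp_exp : F p ≤ Real.exp (-x0) := le_trans hFp_le h1x0exp
      have hnx0 : (n : ℝ) * x0 = (n : ℝ) ^ ε := by
        rw [hx0def]
        rw [Real.rpow_def_of_pos hnpos]
        nth_rewrite 1 [← Real.exp_log hnpos]
        rw [← Real.exp_add]
        congr 1
        ring
      have hpow : (F p) ^ n ≤ E := by
        calc (F p) ^ n ≤ (Real.exp (-x0)) ^ n := pow_le_pow_left₀ hFp0 hFp_exp n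
        _ = Real.exp ((n : ℝ) * (-x0)) := by rw [← Real.exp_nat_mul]
        _ = E := by rw [hEdef]; congr 1; rw [← hnx0]; ring
      have hXnn : 0 ≤ (F p) ^ n := pow_nonneg hFp0 n
      -- final arithmetic
      have key1 : 0 ≤ α * ((1 - ε) * (E - (F p) ^ n)) :=
        mul_nonneg hα0 (mul_nonneg (by linarith) (by linarith))
      have key2 : 0 ≤ α * (ε * E) :=
        mul_nonneg hα0 (mul_nonneg hε0.le hE0.le)
      have hfin : (1 - E - ε) * α ≤ (1 - ε) * α * (1 - (F p) ^ n) := by linarith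
      calc (1 - E - ε) * α ≤ (1 - ε) * α * (1 - (F p) ^ n) := hfin
      _ = p * (1 - (F p) ^ n) := by rw [hpdef]
end
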